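/- arXiv:2008.06689 — 9 statements merged into one kernel-verified Lean document; each statement's English description precedes it below -/
import Mathlib

section
/- If simple arcs R and L share an endpoint a, are otherwise disjoint, and their union I = R ∪ L is a quasi-arc, then R and L are transverse at a; that is, for any sequences uₙ ∈ R and vₙ ∈ L converging to a (with uₙ, vₙ ≠ a), the ratio (uₙ − a)/(vₙ − a) does not converge to 1. -/
open Set Filter Topology

/-- A simple arc in `ℂ`: homeomorphic image of `[0,1]`. -/
def IsSimpleArc (A : Set ℂ) : Prop :=
  ∃ ξ : ℝ → ℂ, ContinuousOn ξ (Icc 0 1) ∧ InjOn ξ (Icc 0 1) ∧ ξ '' Icc 0 1 = A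

/-- `a` is an endpoint of the simple arc `A`. -/
def IsArcEndpoint (a : ℂ) (A : Set ℂ) : Prop :=
  ∃ ξ : ℝ → ℂ, ContinuousOn ξ (Icc 0 1) ∧ InjOn ξ (Icc 0 1) ∧ ξ '' Icc 0 1 = A ∧ ξ 0 = a

/-- The quasi-arc inequality for a parametrization `ξ` with constant `C`. -/
def IsQuasiArcParam (C : ℝ) (ξ : ℝ → ℂ) : Prop :=
  ∀ x y z : ℝ, x ∈ Icc (0:ℝ) 1 → y ∈ Icc (0:ℝ) 1 → z ∈ Icc (0:ℝ) 1 → x ≤ y → y ≤ z →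
    C * ‖ξ x - ξ y‖ ≤ ‖ξ x - ξ z‖

/-- A quasi-arc: a simple arc such that every parametrization satisfies the
quasi-arc inequality with a uniform constant `C > 0`. -/
def IsQuasiArc (A : Set ℂ) : Prop :=
  IsSimpleArc A ∧ ∃ C : ℝ, 0 < C ∧ ∀ ξ : ℝ → ℂ,
    ContinuousOn ξ (Icc 0 1) → InjOn ξ (Icc 0 1) → ξ '' Icc 0 1 = A → IsQuasiArcParam C ξ

/-- if simple arcs `R`, `L` share an endpoint `a`, are otherwise disjoint,
and `R ∪ L` is a quasi-arc, then `R` and `L` are transverse at `a`. -/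
theorem transverse_of_quasiArc
    (R L : Set ℂ) (a : ℂ)
    (hR : IsArcEndpoint a R) (hL : IsArcEndpoint a L)
    (hRL : R ∩ L = {a})
    (hqa : IsQuasiArc (R ∪ L))
    (u v : ℕ → ℂ)
    (hu : ∀ n, u n ∈ R \ {a}) (hv : ∀ n, v n ∈ L \ {a})
    (hua : Tendsto u atTop (𝓝 a)) (hva : Tendsto v atTop (𝓝 a)) :
    ¬ Tendsto (fun n => (u n - a) / (v n - a)) atTop (𝓝 1) := by
  obtain ⟨ξR, hRc, hRi, hRim, hR0⟩ := hR
  obtain ⟨ξL, hLc, hLi, hLim, hL0⟩ := hL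
  obtain ⟨-, C, hC, hquasi⟩ := hqa
  classical
  set ξ : ℝ → ℂ := fun t => if t ≤ 1/2 then ξR (1 - 2*t) else ξL (2*t - 1) with hξdef
  have hval : ξ (1/2) = a := by simp [hξdef, hR0]
  -- membership of the reparametrized points
  have hmapR : ∀ t ∈ Icc (0:ℝ) (1/2), ξ t = ξR (1 - 2*t) := by
    intro t ht; simp only [hξdef]; rw [if_pos ht.2]
  have hmapL : ∀ t ∈ Ioc (1/2:ℝ) 1, ξ t = ξL (2*t - 1) := by
    intro t ht; simp only [hξdef]; rw [if_neg (not_le.2 ht.1)]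
  have hRt : ∀ t ∈ Icc (0:ℝ) (1/2), (1 - 2*t) ∈ Icc (0:ℝ) 1 := by
    intro t ht; exact ⟨by linarith [ht.2], by linarith [ht.1]⟩
  have hLt : ∀ t ∈ Icc (1/2:ℝ) 1, (2*t - 1) ∈ Icc (0:ℝ) 1 := by
    intro t ht; exact ⟨by linarith [ht.1], by linarith [ht.2]⟩
  -- continuity
  have hcont : ContinuousOn ξ (Icc 0 1) := by
    apply ContinuousOn.if
    · intro t ht
      have h1 : frontier {a : ℝ | a ≤ 1/2} = {(1/2 : ℝ)} := frontier_Iic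
      have : t = 1/2 := by
        have := ht.2; rw [h1] at this; simpa using this
      subst this
      norm_num [hR0, hL0]
    · have hcl : closure {a : ℝ | a ≤ 1/2} = Iic (1/2 : ℝ) := by
        rw [show {a : ℝ | a ≤ 1/2} = Iic (1/2 : ℝ) from rfl, isClosed_Iic.closure_eq]
      rw [hcl]
      have hsub : Icc (0:ℝ) 1 ∩ Iic (1/2) ⊆ Icc 0 (1/2) := fun t ht => ⟨ht.1.1, ht.2⟩
      refine ContinuousOn.comp hRc ?_ ?_
      · fun_prop
      · intro t ht; exact hRt t (hsub ht)
    · have hcl : closure {a : ℝ | ¬ a ≤ 1/2} = Ici (1/2 : ℝ) := by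
        rw [show {a : ℝ | ¬ a ≤ 1/2} = Ioi (1/2 : ℝ) from by ext t; simp, closure_Ioi]
      rw [hcl]
      have hsub : Icc (0:ℝ) 1 ∩ Ici (1/2) ⊆ Icc (1/2) 1 := fun t ht => ⟨ht.2, ht.1.2⟩
      refine ContinuousOn.comp hLc ?_ ?_
      · fun_prop
      · intro t ht; exact hLt t (hsub ht)
  -- injectivity
  have hinj : InjOn ξ (Icc 0 1) := by
    intro s hs t ht hst
    have key : ∀ s ∈ Icc (0:ℝ) 1, ∀ t ∈ Icc (0:ℝ) 1, s ≤ 1/2 → ¬ t ≤ 1/2 → ξ s ≠ ξ t := by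
      intro s hs t ht hs2 ht2 heq
      have hsR : ξ s = ξR (1 - 2*s) := hmapR s ⟨hs.1, hs2⟩
      have htL : ξ t = ξL (2*t - 1) := hmapL t ⟨not_le.1 ht2, ht.2⟩
      have hmemR : ξ s ∈ R := by
        rw [hsR, ← hRim]; exact mem_image_of_mem _ (hRt s ⟨hs.1, hs2⟩)
      have hmemL : ξ s ∈ L := by
        rw [heq, htL, ← hLim]; exact mem_image_of_mem _ (hLt t ⟨le_of_lt (not_le.1 ht2), ht.2⟩)
      have : ξ s = a := by
        have : ξ s ∈ R ∩ L := ⟨hmemR, hmemL⟩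
        rwa [hRL, mem_singleton_iff] at this
      -- then ξL (2t-1) = a = ξL 0 forces t = 1/2, contradiction
      have h0 : ξL (2*t - 1) = ξL 0 := by rw [← htL, ← heq, this, hL0]
      have := hLi (hLt t ⟨le_of_lt (not_le.1 ht2), ht.2⟩) ⟨le_refl 0, zero_le_one⟩ h0
      have ht2' := not_le.1 ht2
      linarith [this]
    by_cases hs2 : s ≤ 1/2 <;> by_cases ht2 : t ≤ 1/2
    · have hsR : ξ s = ξR (1 - 2*s) := hmapR s ⟨hs.1, hs2⟩
      have htR : ξ t = ξR (1 - 2*t) := hmapR t ⟨ht.1, ht2⟩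
      have := hRi (hRt s ⟨hs.1, hs2⟩) (hRt t ⟨ht.1, ht2⟩) (by rw [← hsR, ← htR, hst])
      linarith
    · exact absurd hst (key s hs t ht hs2 ht2)
    · exact absurd hst.symm (key t ht s hs ht2 hs2)
    · have hsL : ξ s = ξL (2*s - 1) := hmapL s ⟨not_le.1 hs2, hs.2⟩
      have htL : ξ t = ξL (2*t - 1) := hmapL t ⟨not_le.1 ht2, ht.2⟩
      have := hLi (hLt s ⟨le_of_lt (not_le.1 hs2), hs.2⟩)
        (hLt t ⟨le_of_lt (not_le.1 ht2), ht.2⟩) (by rw [← hsL, ← htL, hst])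
      linarith
  -- image
  have himg : ξ '' Icc 0 1 = R ∪ L := by
    apply Subset.antisymm
    · rintro _ ⟨t, ht, rfl⟩
      by_cases ht2 : t ≤ 1/2
      · left; rw [hmapR t ⟨ht.1, ht2⟩, ← hRim]
        exact mem_image_of_mem _ (hRt t ⟨ht.1, ht2⟩)
      · right; rw [hmapL t ⟨not_le.1 ht2, ht.2⟩, ← hLim]
        exact mem_image_of_mem _ (hLt t ⟨le_of_lt (not_le.1 ht2), ht.2⟩)
    · rintro p (hp | hp)
      · rw [← hRim] at hp; obtain ⟨t, ht, rfl⟩ := hp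
        refine ⟨(1 - t)/2, ⟨by linarith [ht.2], by linarith [ht.1]⟩, ?_⟩
        rw [hmapR _ ⟨by linarith [ht.2], by linarith [ht.1]⟩]
        ring_nf
      · rw [← hLim] at hp; obtain ⟨t, ht, rfl⟩ := hp
        rcases eq_or_lt_of_le ht.1 with h0 | h0
        · refine ⟨1/2, ⟨by norm_num, by norm_num⟩, ?_⟩
          rw [hval, ← h0, hL0]
        · refine ⟨(t + 1)/2, ⟨by linarith [ht.1], by linarith [ht.2]⟩, ?_⟩
          rw [hmapL _ ⟨by linarith, by linarith [ht.2]⟩]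
          ring_nf
  have hq := hquasi ξ hcont hinj himg
  -- every u n, v n lifts to a parameter on the correct side
  have hun : ∀ n, ∃ x ∈ Icc (0:ℝ) (1/2), ξ x = u n := by
    intro n
    have : u n ∈ R := (hu n).1
    rw [← hRim] at this; obtain ⟨t, ht, hteq⟩ := this
    refine ⟨(1 - t)/2, ⟨by linarith [ht.2], by linarith [ht.1]⟩, ?_⟩
    rw [hmapR _ ⟨by linarith [ht.2], by linarith [ht.1]⟩, ← hteq]
    ring_nf
  have hvn : ∀ n, ∃ z ∈ Icc (1/2:ℝ) 1, ξ z = v n := by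
    intro n
    have hmem : v n ∈ L := (hv n).1
    rw [← hLim] at hmem; obtain ⟨t, ht, hteq⟩ := hmem
    rcases eq_or_lt_of_le ht.1 with h0 | h0
    · exfalso; apply (hv n).2
      rw [mem_singleton_iff, ← hteq, ← h0, hL0]
    · refine ⟨(t + 1)/2, ⟨by linarith, by linarith [ht.2]⟩, ?_⟩
      rw [hmapL _ ⟨by linarith, by linarith [ht.2]⟩, ← hteq]
      ring_nf
  -- the key inequality: C * |u n - a| ≤ |u n - v n|
  have hkey : ∀ n, C * ‖u n - a‖ ≤ ‖u n - v n‖ := by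
    intro n
    obtain ⟨x, hx, hxu⟩ := hun n
    obtain ⟨z, hz, hzv⟩ := hvn n
    have := hq x (1/2) z ⟨hx.1, by linarith [hx.2]⟩ ⟨by norm_num, by norm_num⟩
      ⟨by linarith [hz.1], hz.2⟩ hx.2 hz.1
    rwa [hval, hxu, hzv] at this
  -- now derive the contradiction
  intro hlim
  set r : ℕ → ℂ := fun n => (u n - a) / (v n - a) with hrdef
  have hvne : ∀ n, v n - a ≠ 0 := fun n => sub_ne_zero.2 (fun h => (hv n).2 (by simp [h]))
  have hratio : ∀ n, C * ‖r n‖ ≤ ‖r n - 1‖ := by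
    intro n
    have hr : r n * (v n - a) = u n - a := div_mul_cancel₀ _ (hvne n)
    have h1 : ‖u n - a‖ = ‖r n‖ * ‖v n - a‖ := by
      rw [← hr, norm_mul]
    have h2 : ‖u n - v n‖ = ‖r n - 1‖ * ‖v n - a‖ := by
      rw [← norm_mul]
      congr 1
      rw [sub_mul, one_mul, hr]; ring
    have hk := hkey n
    rw [h1, h2] at hk
    have hpos : 0 < ‖v n - a‖ := by
      exact norm_pos_iff.2 (hvne n)
    rw [← mul_assoc] at hk
    exact le_of_mul_le_mul_right hk hpos
  have h3 : Tendsto (fun n => C * ‖r n‖) atTop (𝓝 C) := by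
    simpa using (((continuous_norm.tendsto 1).comp hlim).const_mul C)
  have h4 : Tendsto (fun n => ‖r n - 1‖) atTop (𝓝 0) := by
    have : Tendsto (fun n => r n - 1) atTop (𝓝 0) := by
      simpa using hlim.sub (tendsto_const_nhds (x := (1:ℂ)))
    have h := this.norm; rwa [norm_zero] at h
  have : C ≤ 0 := le_of_tendsto_of_tendsto' h3 h4 hratio
  linarith
end

section
/- Let R ⊂ ℂ be a simple arc with endpoint 0 whose image R' under w ↦ w^k (k > 1) is also a simple arc, and suppose λR' ⊇ R' for some λ ∈ ℂ with |λ| > 1. Then for every k-th root of unity ζ ≠ 1, the arcs R and ζR are transverse at 0: there are no sequences uₙ, vₙ in R with uₙ, vₙ → 0 and vₙ/uₙ → ζ. -/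
open Set Filter Topology
open scoped Classical

-- H1: continuous inverse on compact
theorem myInv {X Y : Type*} [TopologicalSpace X] [TopologicalSpace Y] [T2Space Y]
    (f : X → Y) (s : Set X) (hs : IsCompact s) (hne : s.Nonempty)
    (hc : ContinuousOn f s) (hi : InjOn f s) :
    ∃ g : Y → X, ContinuousOn g (f '' s) ∧ (∀ x ∈ s, g (f x) = x) ∧
      (∀ y ∈ f '' s, g y ∈ s ∧ f (g y) = y) := by
  have : CompactSpace s := isCompact_iff_compactSpace.mp hs
  let F : s → f '' s := fun x => ⟨f x, mem_image_of_mem f x.2⟩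
  have hFb : Function.Bijective F := by
    constructor
    · intro a b hab
      exact Subtype.ext (hi a.2 b.2 (congrArg Subtype.val hab))
    · rintro ⟨y, x, hx, rfl⟩
      exact ⟨⟨x, hx⟩, rfl⟩
  have hFc : Continuous F := Continuous.subtype_mk hc.restrict _
  let e : s ≃ₜ (f '' s) := Continuous.homeoOfEquivCompactToT2 (f := Equiv.ofBijective F hFb) hFc
  obtain ⟨x₀, hx₀⟩ := hne
  let g : Y → X := fun y => if h : y ∈ f '' s then (e.symm ⟨y, h⟩ : X) else x₀
  have hg : ∀ y ∈ f '' s, g y ∈ s ∧ f (g y) = y := by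
    intro y hy
    have h1 : g y = (e.symm ⟨y, hy⟩ : X) := dif_pos hy
    constructor
    · rw [h1]; exact (e.symm ⟨y, hy⟩).2
    · have := e.apply_symm_apply ⟨y, hy⟩
      have h2 : f ((e.symm ⟨y, hy⟩ : s) : X) = y := congrArg Subtype.val this
      rw [h1]; exact h2
  refine ⟨g, ?_, ?_, hg⟩
  · rw [continuousOn_iff_continuous_restrict]
    have : domRestrict (f '' s) g = fun y => (e.symm y : X) := by
      funext y
      simp only [domRestrict, g, dif_pos y.2]
    rw [this]
    exact continuous_subtype_val.comp e.symm.continuous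
  · intro x hx
    have hyx : f x ∈ f '' s := mem_image_of_mem f hx
    have h1 : g (f x) = (e.symm ⟨f x, hyx⟩ : X) := dif_pos hyx
    have : e ⟨x, hx⟩ = ⟨f x, hyx⟩ := rfl
    rw [h1, ← this, e.symm_apply_apply]

-- interior max point contradicts local injectivity
theorem locInj_max {F : ℝ → ℝ} {a b c : ℝ} (hab : a < b) (hc : c ∈ Ioo a b)
    (hFc : ContinuousOn F (Icc a b))
    (hmax : ∀ x ∈ Icc a b, F x ≤ F c)
    (hloc : ∃ ε > 0, InjOn F (Icc (c - ε) (c + ε) ∩ Icc a b)) : False := by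
  obtain ⟨ε, hε, hinj⟩ := hloc
  set ε' := min ε (min (c - a) (b - c)) with hε'def
  have hε' : 0 < ε' := lt_min hε (lt_min (by linarith [hc.1]) (by linarith [hc.2]))
  have hsub : Icc (c - ε') (c + ε') ⊆ Icc (c - ε) (c + ε) ∩ Icc a b := by
    intro x hx
    have h1 : ε' ≤ ε := min_le_left _ _
    have h2 : ε' ≤ c - a := (min_le_right _ _).trans (min_le_left _ _)
    have h3 : ε' ≤ b - c := (min_le_right _ _).trans (min_le_right _ _)
    exact ⟨⟨by linarith [hx.1], by linarith [hx.2]⟩, ⟨by linarith [hx.1], by linarith [hx.2]⟩⟩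
  have hsub2 : Icc (c - ε') (c + ε') ⊆ Icc a b := fun x hx => (hsub hx).2
  have hmemc : c ∈ Icc (c - ε') (c + ε') := ⟨by linarith, by linarith⟩
  have hx1m : c - ε' ∈ Icc (c - ε') (c + ε') := ⟨le_refl _, by linarith⟩
  have hx2m : c + ε' ∈ Icc (c - ε') (c + ε') := ⟨by linarith, le_refl _⟩
  have hF1 : F (c - ε') < F c := by
    rcases lt_or_eq_of_le (hmax _ (hsub2 hx1m)) with h | h
    · exact h
    · exact absurd (hinj (hsub hx1m) (hsub hmemc) h) (by intro hh; linarith)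
  have hF2 : F (c + ε') < F c := by
    rcases lt_or_eq_of_le (hmax _ (hsub2 hx2m)) with h | h
    · exact h
    · exact absurd (hinj (hsub hx2m) (hsub hmemc) h) (by intro hh; linarith)
  set y := max (F (c - ε')) (F (c + ε')) with hy
  have hyc : y < F c := max_lt hF1 hF2
  have hcont1 : ContinuousOn F (Icc (c - ε') c) :=
    hFc.mono (fun x hx => hsub2 ⟨hx.1, hx.2.trans (by linarith)⟩)
  have hcont2 : ContinuousOn F (Icc c (c + ε')) :=
    hFc.mono (fun x hx => hsub2 ⟨(by linarith [hx.1] : c - ε' ≤ x), hx.2⟩)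
  obtain ⟨z₁, hz₁m, hz₁⟩ := intermediate_value_Icc (by linarith : c - ε' ≤ c) hcont1
    (⟨le_max_left _ _, hyc.le⟩ : y ∈ Icc (F (c - ε')) (F c))
  obtain ⟨z₂, hz₂m, hz₂⟩ := intermediate_value_Icc' (by linarith : c ≤ c + ε') hcont2
    (⟨le_max_right _ _, hyc.le⟩ : y ∈ Icc (F (c + ε')) (F c))
  have hz₁c : z₁ ≠ c := fun h => by rw [h] at hz₁; linarith
  have hz₁w : z₁ ∈ Icc (c - ε') (c + ε') := ⟨hz₁m.1, hz₁m.2.trans (by linarith)⟩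
  have hz₂w : z₂ ∈ Icc (c - ε') (c + ε') := ⟨(by linarith [hz₂m.1] : c - ε' ≤ z₂), hz₂m.2⟩
  have : z₁ = z₂ := hinj (hsub hz₁w) (hsub hz₂w) (hz₁.trans hz₂.symm)
  have : z₁ < z₂ := lt_of_lt_of_le (lt_of_le_of_ne hz₁m.2 hz₁c) hz₂m.1
  exact absurd ‹z₁ = z₂› (ne_of_lt this)

theorem locInj_inj {F : ℝ → ℝ} {a b : ℝ} (hab : a < b)
    (hFc : ContinuousOn F (Icc a b))
    (hloc : ∀ c ∈ Icc a b, ∃ ε > 0, InjOn F (Icc (c - ε) (c + ε) ∩ Icc a b))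
    (heq : F a = F b) : False := by
  have hcpt : IsCompact (Icc a b) := isCompact_Icc
  have hne : (Icc a b).Nonempty := nonempty_Icc.mpr hab.le
  obtain ⟨c, hcm, hc⟩ := hcpt.exists_isMaxOn hne hFc
  obtain ⟨c', hc'm, hc'⟩ := hcpt.exists_isMinOn hne hFc
  rw [isMaxOn_iff] at hc
  rw [isMinOn_iff] at hc'
  have ham : a ∈ Icc a b := left_mem_Icc.mpr hab.le
  have hbm : b ∈ Icc a b := right_mem_Icc.mpr hab.le
  by_cases hconst : F c' = F c
  · -- F constant
    obtain ⟨ε, hε, hinj⟩ := hloc a ham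
    set w := min (a + ε) b with hw
    have hwm : w ∈ Icc a b := ⟨le_min (by linarith) hab.le, min_le_right _ _⟩
    have haw : a < w := lt_min (by linarith) hab
    have h1 : a ∈ Icc (a - ε) (a + ε) ∩ Icc a b := ⟨⟨by linarith, by linarith⟩, ham⟩
    have h2 : w ∈ Icc (a - ε) (a + ε) ∩ Icc a b :=
      ⟨⟨by linarith [haw], min_le_left _ _⟩, hwm⟩
    have hFeq : F a = F w := by
      have e1 : F a = F c := le_antisymm (hc a ham) (hconst ▸ hc' a ham)
      have e2 : F w = F c := le_antisymm (hc w hwm) (hconst ▸ hc' w hwm)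
      rw [e1, e2]
    exact absurd (hinj h1 h2 hFeq) (ne_of_lt haw)
  · have hlt : F c' < F c := lt_of_le_of_ne (hc' c hcm) hconst
    by_cases hFa : F a < F c
    · have hca : c ≠ a := fun h => by rw [h] at hFa; exact lt_irrefl _ hFa
      have hcb : c ≠ b := fun h => by rw [h, ← heq] at hFa; exact lt_irrefl _ hFa
      exact locInj_max hab ⟨lt_of_le_of_ne hcm.1 (Ne.symm hca), lt_of_le_of_ne hcm.2 hcb⟩
        hFc hc (hloc c hcm)
    · have hFac : F a = F c := le_antisymm (hc a ham) (not_lt.mp hFa)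
      have hc'a : F c' < F a := by rw [hFac]; exact hlt
      have hc'b : F c' < F b := heq ▸ hc'a
      have hca' : c' ≠ a := fun h => by rw [h] at hc'a; exact lt_irrefl _ hc'a
      have hcb' : c' ≠ b := fun h => by rw [h] at hc'b; exact lt_irrefl _ hc'b
      obtain ⟨ε, hε, hinj⟩ := hloc c' hc'm
      refine locInj_max (F := fun x => -F x)
        hab ⟨lt_of_le_of_ne hc'm.1 (Ne.symm hca'), lt_of_le_of_ne hc'm.2 hcb'⟩
        hFc.neg (fun x hx => neg_le_neg (hc' x hx)) ⟨ε, hε, fun x hx y hy hxy => hinj hx hy ?_⟩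
      have : -F x = -F y := hxy
      linarith

-- finite preconnected set is subsingleton
theorem fin_preconn {s : Set ℂ} (hs : IsPreconnected s) (hf : s.Finite) :
    s.Subsingleton := by
  intro x hx y hy
  by_contra hxy
  have hUo : IsOpen ({x}ᶜ : Set ℂ) := isOpen_compl_singleton
  have hVo : IsOpen ((s \ {x})ᶜ : Set ℂ) := (hf.subset diff_subset).isClosed.isOpen_compl
  have hcov : s ⊆ {x}ᶜ ∪ (s \ {x})ᶜ := by
    intro z hz
    by_cases h : z = x
    · right; simp [h]
    · left; simpa using h
  have h1 : (s ∩ {x}ᶜ).Nonempty := ⟨y, hy, fun h => hxy (h ▸ rfl) ⟩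
  have h2 : (s ∩ (s \ {x})ᶜ).Nonempty := ⟨x, hx, by simp⟩
  obtain ⟨z, hzs, hz1, hz2⟩ := hs _ _ hUo hVo hcov h1 h2
  simp only [mem_compl_iff, mem_singleton_iff, mem_diff, not_and, not_not] at hz1 hz2
  exact hz1 (hz2 hzs)

-- finiteness of k-th roots
theorem roots_finite (k : ℕ) (hk : 0 < k) (c : ℂ) : {z : ℂ | z ^ k = c}.Finite := by
  have hp : (Polynomial.X ^ k - Polynomial.C c : Polynomial ℂ) ≠ 0 :=
    Polynomial.X_pow_sub_C_ne_zero hk c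
  apply Set.Finite.subset (Polynomial.finite_setOf_isRoot hp)
  intro z hz
  simp only [mem_setOf_eq] at hz
  simp [Polynomial.IsRoot, hz]

/-- if `R` is a simple arc with endpoint `0`, whose image `R'` under
`w ↦ w^k` (`k > 1`) is a simple arc with `λ R' ⊇ R'` for some `|λ| > 1`, then for every
`k`-th root of unity `ζ ≠ 1` the arcs `R` and `ζ R` are transverse at `0`: there are no
sequences `uₙ, vₙ ∈ R \ {0}` tending to `0` with `vₙ/uₙ → ζ`. -/
theorem transverse_of_pullback_ray
    (k : ℕ) (hk : 1 < k) (R : Set ℂ)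
    (hR : IsArcEndpoint 0 R)
    (hR' : IsSimpleArc ((fun w => w ^ k) '' R))
    (lam : ℂ) (hlam : 1 < ‖lam‖)
    (hinv : (fun w => w ^ k) '' R ⊆ (fun z => lam * z) '' ((fun w => w ^ k) '' R))
    (ζ : ℂ) (hζ : ζ ^ k = 1) (hζ1 : ζ ≠ 1) :
    ¬ ∃ u v : ℕ → ℂ, (∀ n, u n ∈ R \ {0}) ∧ (∀ n, v n ∈ R \ {0}) ∧
      Tendsto u atTop (𝓝 0) ∧ Tendsto v atTop (𝓝 0) ∧
      Tendsto (fun n => v n / u n) atTop (𝓝 ζ) := by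
  rintro ⟨u, v, hu, hv, huT, hvT, hr⟩
  obtain ⟨ξ, hξc, hξi, hξim, hξ0⟩ := hR
  obtain ⟨η, hηc, hηi, hηim⟩ := hR'
  have hk0 : 0 < k := by omega
  have hkC : (k : ℂ) ≠ 0 := Nat.cast_ne_zero.mpr (by omega)
  have hlam0 : lam ≠ 0 := by
    intro h; rw [h] at hlam; simp at hlam; linarith
  set R' : Set ℂ := (fun w => w ^ k) '' R with hR'def
  have h0R : (0 : ℂ) ∈ R := by
    rw [← hξim]; exact ⟨0, left_mem_Icc.mpr zero_le_one, hξ0⟩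
  have h0R' : (0 : ℂ) ∈ R' := ⟨0, h0R, by simp [hk0.ne']⟩
  have hmemR' : ∀ w ∈ R, w ^ k ∈ R' := fun w hw => ⟨w, hw, rfl⟩
  have hRcpt : IsCompact R := by
    rw [← hξim]; exact isCompact_Icc.image_of_continuousOn hξc
  have hinv' : ∀ z ∈ R', lam⁻¹ * z ∈ R' := by
    intro z hz
    obtain ⟨y, hy, hyz⟩ := hinv hz
    have : lam⁻¹ * z = y := by rw [← hyz]; field_simp
    exact this ▸ hy
  have hξne : ∀ x ∈ Icc (0:ℝ) 1, x ≠ 0 → ξ x ≠ 0 := by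
    intro x hx hx0 h
    exact hx0 (hξi hx (left_mem_Icc.mpr zero_le_one) (h.trans hξ0.symm))
  have hξ1ne : ξ 1 ≠ 0 := hξne 1 (right_mem_Icc.mpr zero_le_one) one_ne_zero
  -- inverse of η
  obtain ⟨p, hpc, hpl, hpr⟩ := myInv η (Icc 0 1) isCompact_Icc
    (nonempty_Icc.mpr zero_le_one) hηc hηi
  rw [hηim] at hpc hpr
  -- Step A : injectivity of w ^ k on R
  have hqinj : InjOn (fun w => w ^ k) R := by
    have hpinj : ∀ w₁ ∈ R', ∀ w₂ ∈ R', p w₁ = p w₂ → w₁ = w₂ := by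
      intro w₁ h₁ w₂ h₂ h
      rw [← (hpr w₁ h₁).2, ← (hpr w₂ h₂).2, h]
    have key : ∀ x ∈ Ioc (0:ℝ) 1, ∀ y ∈ Ioc (0:ℝ) 1, x < y → ξ x ^ k = ξ y ^ k → False := by
      intro x hx y hy hlt hxy
      have hsub : Icc x y ⊆ Icc (0:ℝ) 1 := Icc_subset_Icc hx.1.le hy.2
      have hmapR' : ∀ z ∈ Icc (0:ℝ) 1, ξ z ^ k ∈ R' :=
        fun z hz => hmemR' _ (hξim ▸ mem_image_of_mem ξ hz)
      set F : ℝ → ℝ := fun z => p (ξ z ^ k) with hF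
      refine locInj_inj (F := F) hlt ?_ ?_ ?_
      · exact (hpc.comp ((hξc.mono hsub).pow k) (fun z hz => hmapR' z (hsub hz)))
      · -- local injectivity
        intro c hc
        have hc01 : c ∈ Icc (0:ℝ) 1 := hsub hc
        have hξcne : ξ c ≠ 0 := hξne c hc01 (ne_of_gt (lt_of_lt_of_le hx.1 hc.1))
        set Gs : ℝ × ℝ → ℂ :=
          fun q => ∑ i ∈ Finset.range k, ξ q.1 ^ i * ξ q.2 ^ (k - 1 - i) with hGsdef
        set s2 : Set (ℝ × ℝ) := Icc (0:ℝ) 1 ×ˢ Icc (0:ℝ) 1 with hs2def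
        have hfstc : ContinuousOn (fun q : ℝ × ℝ => ξ q.1) s2 :=
          hξc.comp continuousOn_fst (fun q hq => hq.1)
        have hsndc : ContinuousOn (fun q : ℝ × ℝ => ξ q.2) s2 :=
          hξc.comp continuousOn_snd (fun q hq => hq.2)
        have hGsc : ContinuousOn Gs s2 := by
          apply continuousOn_finset_sum
          intro i _
          exact (hfstc.pow i).mul (hsndc.pow (k - 1 - i))
        have hGsval : Gs (c, c) = (k : ℂ) * ξ c ^ (k - 1) := by
          rw [hGsdef]
          simp only
          rw [Finset.sum_congr rfl (fun i hi => ?_), Finset.sum_const, Finset.card_range,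
            nsmul_eq_mul]
          rw [← pow_add]
          congr 1
          have : i < k := Finset.mem_range.mp hi
          omega
        have hGsne : Gs (c, c) ≠ 0 := by
          rw [hGsval]
          exact mul_ne_zero hkC (pow_ne_zero _ hξcne)
        have hccs2 : (c, c) ∈ s2 := mk_mem_prod hc01 hc01
        have hcwa := hGsc (c, c) hccs2
        have hev : {q : ℝ × ℝ | Gs q ≠ 0} ∈ 𝓝[s2] (c, c) :=
          hcwa (isOpen_compl_singleton.mem_nhds hGsne)
        rw [mem_nhdsWithin] at hev
        obtain ⟨U, hUo, hUc, hUsub⟩ := hev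
        obtain ⟨ε, hε, hball⟩ := Metric.isOpen_iff.mp hUo _ hUc
        refine ⟨ε/2, by positivity, ?_⟩
        intro z₁ hz₁ z₂ hz₂ hFz
        have hz₁I : z₁ ∈ Icc (0:ℝ) 1 := hsub hz₁.2
        have hz₂I : z₂ ∈ Icc (0:ℝ) 1 := hsub hz₂.2
        have hpow : ξ z₁ ^ k = ξ z₂ ^ k :=
          hpinj _ (hmapR' _ hz₁I) _ (hmapR' _ hz₂I) hFz
        have hpair : (z₁, z₂) ∈ U := by
          apply hball
          rw [Metric.mem_ball, Prod.dist_eq]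
          have d1 : dist z₁ c ≤ ε/2 := by
            rw [Real.dist_eq, abs_le]
            constructor <;> [linarith [hz₁.1.1]; linarith [hz₁.1.2]]
          have d2 : dist z₂ c ≤ ε/2 := by
            rw [Real.dist_eq, abs_le]
            constructor <;> [linarith [hz₂.1.1]; linarith [hz₂.1.2]]
          calc max (dist z₁ c) (dist z₂ c) ≤ ε/2 := max_le d1 d2
            _ < ε := by linarith
        have hGs0 : Gs (z₁, z₂) ≠ 0 := hUsub ⟨hpair, mk_mem_prod hz₁I hz₂I⟩
        have hfac := geom_sum₂_mul (ξ z₁) (ξ z₂) k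
        have : Gs (z₁, z₂) * (ξ z₁ - ξ z₂) = 0 := by
          rw [hGsdef]
          simp only
          rw [hfac, hpow, sub_self]
        rcases mul_eq_zero.mp this with h | h
        · exact absurd h hGs0
        · exact hξi hz₁I hz₂I (by linear_combination h)
      · rw [hF]
        simp only
        rw [hxy]
    intro w hw w' hw' heqk
    simp only at heqk
    obtain ⟨x, hx, rfl⟩ := hξim ▸ hw
    obtain ⟨x', hx', rfl⟩ := hξim ▸ hw'
    rcases eq_or_ne x 0 with h0 | h0
    · rcases eq_or_ne x' 0 with h0' | h0'
      · rw [h0, h0']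
      · exfalso
        have : ξ x' ^ k = 0 := by rw [← heqk, h0, hξ0, zero_pow hk0.ne']
        exact hξne x' hx' h0' (pow_eq_zero_iff hk0.ne' |>.mp this)
    · rcases eq_or_ne x' 0 with h0' | h0'
      · exfalso
        have : ξ x ^ k = 0 := by rw [heqk, h0', hξ0, zero_pow hk0.ne']
        exact hξne x hx h0 (pow_eq_zero_iff hk0.ne' |>.mp this)
      · have hxm : x ∈ Ioc (0:ℝ) 1 := ⟨lt_of_le_of_ne hx.1 (Ne.symm h0), hx.2⟩
        have hxm' : x' ∈ Ioc (0:ℝ) 1 := ⟨lt_of_le_of_ne hx'.1 (Ne.symm h0'), hx'.2⟩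
        rcases lt_trichotomy x x' with hlt | heq | hlt
        · exact absurd (key x hxm x' hxm' hlt heqk) not_false
        · rw [heq]
        · exact absurd (key x' hxm' x hxm hlt heqk.symm) not_false
  -- Step B : inverse of q on R
  obtain ⟨Q, hQc, hQl, hQr⟩ := myInv (fun w => w ^ k) R hRcpt ⟨0, h0R⟩
    (continuousOn_pow k) hqinj
  rw [show (fun w => w ^ k) '' R = R' from rfl] at hQc hQr
  -- Step C : the multiplier μ
  obtain ⟨μ, hμk, hμmul⟩ :
      ∃ μ : ℂ, μ ^ k = lam⁻¹ ∧ ∀ w ∈ R, w ≠ 0 → Q (lam⁻¹ * w ^ k) = μ * w := by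
    set A : Set ℂ := R \ {0} with hAdef
    have hA0 : ∀ w ∈ A, w ≠ 0 := fun w hw => by
      have := hw.2; simpa using this
    have hAeq : A = ξ '' Ioc 0 1 := by
      rw [hAdef, ← hξim]
      ext z
      constructor
      · rintro ⟨⟨x, hx, rfl⟩, hz0⟩
        have hx0 : x ≠ 0 := by
          intro h
          rw [h, hξ0] at hz0
          simp at hz0
        exact ⟨x, ⟨lt_of_le_of_ne hx.1 (Ne.symm hx0), hx.2⟩, rfl⟩
      · rintro ⟨x, hx, rfl⟩
        refine ⟨⟨x, ⟨hx.1.le, hx.2⟩, rfl⟩, ?_⟩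
        simpa using hξne x ⟨hx.1.le, hx.2⟩ hx.1.ne'
    have hH : ∀ w ∈ A, Q (lam⁻¹ * w ^ k) ∈ R ∧ (Q (lam⁻¹ * w ^ k)) ^ k = lam⁻¹ * w ^ k :=
      fun w hw => hQr _ (hinv' _ (hmemR' w hw.1))
    set r : ℂ → ℂ := fun w => Q (lam⁻¹ * w ^ k) / w with hrdef
    have hmapsto : MapsTo (fun w : ℂ => lam⁻¹ * w ^ k) A R' :=
      fun w hw => hinv' _ (hmemR' w hw.1)
    have hrc : ContinuousOn r A := by
      apply ContinuousOn.div
      · exact hQc.comp ((continuous_const.mul (continuous_pow k)).continuousOn) hmapsto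
      · exact continuousOn_id
      · exact hA0
    have hrval : ∀ w ∈ A, (r w) ^ k = lam⁻¹ := by
      intro w hw
      have hw0 : w ≠ 0 := hA0 w hw
      rw [hrdef]
      simp only
      rw [div_pow, (hH w hw).2, mul_div_assoc, div_self (pow_ne_zero k hw0), mul_one]
    have hApre : IsPreconnected A :=
      hAeq ▸ (isPreconnected_Ioc.image ξ (hξc.mono Ioc_subset_Icc_self))
    have himg : r '' A ⊆ {z : ℂ | z ^ k = lam⁻¹} := by
      rintro z ⟨w, hw, rfl⟩
      exact hrval w hw
    have hsub : (r '' A).Subsingleton :=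
      fin_preconn (hApre.image r hrc) ((roots_finite k hk0 _).subset himg)
    have hξ1A : ξ 1 ∈ A := ⟨hξim ▸ mem_image_of_mem ξ (right_mem_Icc.mpr zero_le_one),
      by simpa using hξ1ne⟩
    refine ⟨r (ξ 1), hrval _ hξ1A, ?_⟩
    intro w hw hw0
    have hwA : w ∈ A := ⟨hw, by simpa using hw0⟩
    have heq : r w = r (ξ 1) := hsub (mem_image_of_mem r hwA) (mem_image_of_mem r hξ1A)
    have : r w * w = Q (lam⁻¹ * w ^ k) := by
      rw [hrdef]; field_simp
    rw [← this, heq]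
  have hμ0 : μ ≠ 0 := by
    intro h; rw [h, zero_pow hk0.ne'] at hμk
    exact hlam0 (by simpa using hμk.symm)
  have hμabs : ‖μ‖ < 1 := by
    have h2 : ‖μ‖ ^ k = ‖lam‖⁻¹ := by rw [← norm_pow, hμk, norm_inv]
    by_contra h
    push_neg at h
    have h1 : (1:ℝ) ≤ ‖μ‖ ^ k := one_le_pow₀ h
    have h3 : ‖lam‖⁻¹ < 1 := inv_lt_one_of_one_lt₀ hlam
    rw [h2] at h1; linarith
  have hμmem : ∀ w ∈ R, μ * w ∈ R := by
    intro w hw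
    by_cases hw0 : w = 0
    · simpa [hw0] using h0R
    · rw [← hμmul w hw hw0]
      exact (hQr _ (hinv' _ (hmemR' w hw))).1
  have hμpowmem : ∀ (n : ℕ), ∀ w ∈ R, μ ^ n * w ∈ R := by
    intro n
    induction n with
    | zero => intro w hw; simpa using hw
    | succ n ih =>
        intro w hw
        have := hμmem _ (ih w hw)
        rw [pow_succ] at *
        convert this using 1; ring
  -- Step D : inverse of ξ and the interval map G
  obtain ⟨θ, hθc, hθl, hθr⟩ := myInv ξ (Icc 0 1) isCompact_Icc
    (nonempty_Icc.mpr zero_le_one) hξc hξi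
  rw [hξim] at hθc hθr
  set G : ℝ → ℝ := fun x => θ (μ * ξ x) with hGdef
  have hGmem : ∀ x ∈ Icc (0:ℝ) 1, G x ∈ Icc (0:ℝ) 1 :=
    fun x hx => (hθr _ (hμmem _ (hξim ▸ mem_image_of_mem ξ hx))).1
  have hGξ : ∀ x ∈ Icc (0:ℝ) 1, ξ (G x) = μ * ξ x :=
    fun x hx => (hθr _ (hμmem _ (hξim ▸ mem_image_of_mem ξ hx))).2
  have hG0 : G 0 = 0 := by
    have : μ * ξ 0 = ξ 0 := by rw [hξ0]; ring
    rw [hGdef]; simp only [this]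
    exact hθl 0 (left_mem_Icc.mpr zero_le_one)
  have hGinj : InjOn G (Icc 0 1) := by
    intro x hx y hy hxy
    have h1 : ξ (G x) = ξ (G y) := by rw [hxy]
    rw [hGξ x hx, hGξ y hy] at h1
    exact hξi hx hy (mul_left_cancel₀ hμ0 h1)
  have hGc : ContinuousOn G (Icc 0 1) := by
    apply hθc.comp ((continuous_const.mul (continuous_id)).comp_continuousOn hξc)
    intro x hx
    exact hμmem _ (hξim ▸ mem_image_of_mem ξ hx)
  have hGmono : StrictMonoOn G (Icc 0 1) := by
    rcases hGc.strictMonoOn_of_injOn_Icc' zero_le_one hGinj with h | h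
    · exact h
    · exfalso
      have h1 : G 1 < G 0 := h (left_mem_Icc.mpr zero_le_one)
        (right_mem_Icc.mpr zero_le_one) zero_lt_one
      rw [hG0] at h1
      exact absurd (hGmem 1 (right_mem_Icc.mpr zero_le_one)).1 (by linarith)
  have hG1mem : G 1 ∈ Icc (0:ℝ) 1 := hGmem 1 (right_mem_Icc.mpr zero_le_one)
  have hG1pos : 0 < G 1 := by
    rcases lt_or_eq_of_le hG1mem.1 with h | h
    · exact h
    · exfalso
      have := hGinj (right_mem_Icc.mpr zero_le_one) (left_mem_Icc.mpr zero_le_one)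
        (by rw [← h, hG0])
      norm_num at this
  have hG1lt : G 1 < 1 := by
    rcases lt_or_eq_of_le hG1mem.2 with h | h
    · exact h
    · exfalso
      have h1 : ξ (G 1) = μ * ξ 1 := hGξ 1 (right_mem_Icc.mpr zero_le_one)
      rw [h] at h1
      have : (1 - μ) * ξ 1 = 0 := by rw [sub_mul, ← h1]; ring
      rcases mul_eq_zero.mp this with h2 | h2
      · have : μ = 1 := by linear_combination -h2
        rw [this] at hμabs; simp at hμabs
      · exact hξ1ne h2
  -- iterates of G
  have hiter : ∀ (n : ℕ), ∀ y ∈ Icc (0:ℝ) 1, G^[n] y ∈ Icc (0:ℝ) 1 ∧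
      ξ (G^[n] y) = μ ^ n * ξ y := by
    intro n
    induction n with
    | zero => intro y hy; simpa using hy
    | succ n ih =>
        intro y hy
        rw [Function.iterate_succ_apply']
        obtain ⟨h1, h2⟩ := ih y hy
        refine ⟨hGmem _ h1, ?_⟩
        rw [hGξ _ h1, h2, pow_succ]; ring
  have h1mem : (1:ℝ) ∈ Icc (0:ℝ) 1 := right_mem_Icc.mpr zero_le_one
  have hiter_mono : ∀ (n : ℕ), ∀ y ∈ Icc (0:ℝ) 1, ∀ z ∈ Icc (0:ℝ) 1, y ≤ z →
      G^[n] y ≤ G^[n] z := by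
    intro n
    induction n with
    | zero => intro y _ z _ h; simpa using h
    | succ n ih =>
        intro y hy z hz h
        rw [Function.iterate_succ_apply' G n y, Function.iterate_succ_apply' G n z]
        exact hGmono.monotoneOn (hiter n y hy).1 (hiter n z hz).1 (ih y hy z hz h)
  have hξ1R : ξ 1 ∈ R := hξim ▸ mem_image_of_mem ξ h1mem
  have hgn_step : ∀ j : ℕ, G^[j+1] 1 ≤ G^[j] 1 := by
    intro j
    induction j with
    | zero => simpa using hG1lt.le
    | succ j ih =>
        have hm := (hGmono.monotoneOn) (hiter (j+1) 1 h1mem).1 (hiter j 1 h1mem).1 ih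
        calc G^[j+1+1] 1 = G (G^[j+1] 1) := Function.iterate_succ_apply' G (j+1) 1
          _ ≤ G (G^[j] 1) := hm
          _ = G^[j+1] 1 := (Function.iterate_succ_apply' G j 1).symm
  have hgn_anti : Antitone (fun n => G^[n] 1) := antitone_nat_of_succ_le hgn_step
  have hgn_tendsto : Tendsto (fun n => G^[n] 1) atTop (𝓝 0) := by
    have hθ0 : θ 0 = 0 := by
      have := hθl 0 (left_mem_Icc.mpr zero_le_one)
      rwa [hξ0] at this
    have hseq : Tendsto (fun n : ℕ => μ ^ n * ξ 1) atTop (𝓝 0) := by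
      have h1 : Tendsto (fun n : ℕ => μ ^ n) atTop (𝓝 0) := by
        apply tendsto_pow_atTop_nhds_zero_of_norm_lt_one
        exact hμabs
      simpa using h1.mul_const (ξ 1)
    have hmem : ∀ n : ℕ, μ ^ n * ξ 1 ∈ R := fun n => hμpowmem n _ hξ1R
    have hwithin : Tendsto (fun n : ℕ => μ ^ n * ξ 1) atTop (𝓝[R] 0) := by
      rw [tendsto_nhdsWithin_iff]
      exact ⟨hseq, Eventually.of_forall hmem⟩
    have := ((hθc 0 h0R).tendsto.comp hwithin)
    rw [hθ0] at this
    convert this using 2 with n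
    have h2 : θ (ξ (G^[n] 1)) = G^[n] 1 := hθl _ (hiter n 1 h1mem).1
    rw [(hiter n 1 h1mem).2] at h2
    exact h2.symm
  -- decomposition
  have hdecomp : ∀ w ∈ R, w ≠ 0 → ∃ (n : ℕ) (y : ℝ), y ∈ Icc (G 1) 1 ∧
      w = μ ^ n * ξ y := by
    intro w hw hw0
    obtain ⟨x, hx, rfl⟩ := hξim ▸ hw
    have hx0 : 0 < x := by
      rcases lt_or_eq_of_le hx.1 with h | h
      · exact h
      · exact absurd (hξ0 ▸ (h ▸ rfl : ξ x = ξ 0)) hw0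
    have hev : ∃ n, G^[n+1] 1 < x := by
      have := hgn_tendsto.eventually (gt_mem_nhds hx0)
      obtain ⟨n, hn⟩ := this.exists
      exact ⟨n, by simpa using (hgn_anti (Nat.le_succ n)).trans_lt hn⟩
    set n := Nat.find hev with hndef
    have hn1 : G^[n+1] 1 < x := Nat.find_spec hev
    have hn2 : x ≤ G^[n] 1 := by
      rcases Nat.eq_zero_or_pos n with h | h
      · rw [h]; simpa using hx.2
      · have := Nat.find_min hev (m := n - 1) (by omega)
        push_neg at this
        have heq : n - 1 + 1 = n := by omega
        rwa [heq] at this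
    have hJc : ContinuousOn (G^[n]) (Icc (G 1) 1) := by
      have : ∀ m : ℕ, ContinuousOn (G^[m]) (Icc (0:ℝ) 1) := by
        intro m
        induction m with
        | zero => simpa using continuousOn_id
        | succ m ih =>
            have : ContinuousOn (G ∘ G^[m]) (Icc (0:ℝ) 1) :=
              hGc.comp ih (fun z hz => (hiter m z hz).1)
            rwa [← Function.iterate_succ' G m] at this
      exact (this n).mono (Icc_subset_Icc hG1mem.1 le_rfl)
    have hIVT := intermediate_value_Icc hG1mem.2 hJc
    have hxmem : x ∈ Icc (G^[n] (G 1)) (G^[n] 1) := by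
      constructor
      · rw [← Function.iterate_succ_apply]; exact hn1.le
      · exact hn2
    obtain ⟨y, hy, hyx⟩ := hIVT hxmem
    have hyI : y ∈ Icc (0:ℝ) 1 := Icc_subset_Icc hG1mem.1 le_rfl hy
    exact ⟨n, y, hy, by rw [← (hiter n y hyI).2, hyx]⟩
  -- decompose the sequences
  choose m ys hysJ hueq using fun n => hdecomp (u n) (hu n).1 (by simpa using (hu n).2)
  choose l yt hytJ hveq using fun n => hdecomp (v n) (hv n).1 (by simpa using (hv n).2)
  set J : Set ℝ := Icc (G 1) 1 with hJdef
  have hJsub : J ⊆ Icc (0:ℝ) 1 := Icc_subset_Icc hG1mem.1 le_rfl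
  have hJne0 : ∀ y ∈ J, ξ y ≠ 0 := fun y hy =>
    hξne y (hJsub hy) (ne_of_gt (lt_of_lt_of_le hG1pos hy.1))
  have hJcpt : IsCompact J := isCompact_Icc
  have hJne : J.Nonempty := nonempty_Icc.mpr hG1lt.le
  have habsc : ContinuousOn (fun y => ‖ξ y‖) J :=
    continuous_norm.comp_continuousOn (hξc.mono hJsub)
  obtain ⟨y₁, hy₁J, hy₁⟩ := hJcpt.exists_isMinOn hJne habsc
  obtain ⟨y₂, hy₂J, hy₂⟩ := hJcpt.exists_isMaxOn hJne habsc
  rw [isMinOn_iff] at hy₁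
  rw [isMaxOn_iff] at hy₂
  set δ := ‖ξ y₁‖ with hδdef
  set Δ := ‖ξ y₂‖ with hΔdef
  have hδpos : 0 < δ := by
    rw [hδdef]
    exact norm_pos_iff.mpr (hJne0 y₁ hy₁J)
  have hΔpos : 0 < Δ := lt_of_lt_of_le hδpos (hy₂ y₁ hy₁J)
  have hζabs : ‖ζ‖ = 1 := by
    have h1 : ‖ζ‖ ^ k = 1 := by rw [← norm_pow, hζ, norm_one]
    rcases lt_trichotomy (‖ζ‖) 1 with h | h | h
    · have := pow_lt_one₀ (norm_nonneg _) h hk0.ne'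
      rw [h1] at this; linarith
    · exact h
    · have := one_lt_pow₀ h hk0.ne'
      rw [h1] at this; linarith
  set d : ℕ → ℤ := fun n => (l n : ℤ) - m n with hd_def
  have hune : ∀ n, u n ≠ 0 := fun n => by simpa using (hu n).2
  have hratio : ∀ n, v n / u n = μ ^ (d n) * (ξ (yt n) / ξ (ys n)) := by
    intro n
    rw [hueq n, hveq n, hd_def]
    simp only
    rw [zpow_sub₀ hμ0, zpow_natCast, zpow_natCast]
    have h1 : ξ (ys n) ≠ 0 := hJne0 _ (hysJ n)
    have h2 : (μ ^ m n : ℂ) ≠ 0 := pow_ne_zero _ hμ0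
    field_simp
    try ring
  have habsratio : ∀ n, ‖v n / u n‖ =
      ‖μ‖ ^ (d n) * (‖ξ (yt n)‖ / ‖ξ (ys n)‖) := by
    intro n
    rw [hratio n, norm_mul, norm_zpow, norm_div]
  have hμa0 : 0 < ‖μ‖ := norm_pos_iff.mpr hμ0
  have habsT : Tendsto (fun n => ‖v n / u n‖) atTop (𝓝 1) := by
    have := (continuous_norm.tendsto ζ).comp hr
    rwa [hζabs] at this
  have hev : ∀ᶠ n in atTop, (1:ℝ)/2 < ‖v n / u n‖ ∧
      ‖v n / u n‖ < 2 := by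
    have h1 := habsT.eventually (eventually_gt_nhds (by norm_num : (1:ℝ)/2 < 1))
    have h2 := habsT.eventually (eventually_lt_nhds (by norm_num : (1:ℝ) < 2))
    filter_upwards [h1, h2] with n ha hb using ⟨ha, hb⟩
  obtain ⟨N₀, hN₀⟩ : ∃ N₀ : ℕ, ‖μ‖ ^ N₀ < δ / (2 * Δ) := by
    have htd := tendsto_pow_atTop_nhds_zero_of_lt_one (le_of_lt hμa0) hμabs
    have := htd.eventually (eventually_lt_nhds (by positivity : (0:ℝ) < δ / (2 * Δ)))
    obtain ⟨N₀, hN₀⟩ := this.exists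
    exact ⟨N₀, hN₀⟩
  have hdbound : ∀ᶠ n in atTop, d n ∈ Finset.Icc (-(N₀:ℤ)) N₀ := by
    filter_upwards [hev] with n hn
    obtain ⟨h1, h2⟩ := hn
    rw [habsratio n] at h1 h2
    set z := ‖μ‖ ^ (d n) with hzdef
    have hz : 0 < z := zpow_pos hμa0 _
    have hyt1 : δ ≤ ‖ξ (yt n)‖ := hy₁ _ (hytJ n)
    have hyt2 : ‖ξ (yt n)‖ ≤ Δ := hy₂ _ (hytJ n)
    have hys1 : δ ≤ ‖ξ (ys n)‖ := hy₁ _ (hysJ n)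
    have hys2 : ‖ξ (ys n)‖ ≤ Δ := hy₂ _ (hysJ n)
    have hayspos : 0 < ‖ξ (ys n)‖ := lt_of_lt_of_le hδpos hys1
    have hzup : z < 2 * Δ / δ := by
      rw [← mul_div_assoc, div_lt_iff₀ hayspos] at h2
      rw [lt_div_iff₀ hδpos]
      nlinarith [mul_le_mul_of_nonneg_left hyt1 hz.le, hys2]
    have hzlow : δ / (2 * Δ) < z := by
      rw [← mul_div_assoc, lt_div_iff₀ hayspos] at h1
      rw [div_lt_iff₀ (by positivity : (0:ℝ) < 2 * Δ)]
      nlinarith [mul_le_mul_of_nonneg_left hyt2 hz.le, hys1]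
    simp only [Finset.mem_Icc]
    constructor
    · by_contra hcon
      push_neg at hcon
      have hle : d n ≤ -(N₀:ℤ) := by omega
      have : ‖μ‖ ^ (-(N₀:ℤ)) ≤ z :=
        zpow_le_zpow_right_of_le_one₀ hμa0 hμabs.le hle
      rw [zpow_neg, zpow_natCast] at this
      have h3 : 2 * Δ / δ < (‖μ‖ ^ N₀)⁻¹ := by
        rw [lt_inv_comm₀ (by positivity) (by positivity)]
        rw [inv_div]
        exact hN₀
      linarith
    · by_contra hcon
      push_neg at hcon
      have hle : (N₀:ℤ) ≤ d n := by omega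
      have : z ≤ ‖μ‖ ^ (N₀:ℤ) :=
        zpow_le_zpow_right_of_le_one₀ hμa0 hμabs.le hle
      rw [zpow_natCast] at this
      linarith
  -- pigeonhole for d
  obtain ⟨d₀, hd₀⟩ : ∃ d₀ : ℤ, ∃ᶠ n in atTop, d n = d₀ := by
    by_contra hcon
    push_neg at hcon
    have h' : ∀ d₀ : ℤ, ∀ᶠ n in atTop, d n ≠ d₀ := by
      intro d₀
      have := hcon d₀
      exact this
    have hall : ∀ᶠ n in atTop, ∀ d₀ ∈ Finset.Icc (-(N₀:ℤ)) N₀, d n ≠ d₀ :=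
      Filter.eventually_all_finset _ |>.mpr (fun d₀ _ => h' d₀)
    obtain ⟨n, hn1, hn2⟩ := (hdbound.and hall).exists
    exact hn2 (d n) hn1 rfl
  obtain ⟨φ₁, hφ₁, hdφ⟩ := Filter.extraction_of_frequently_atTop hd₀
  have hJJ : IsCompact (J ×ˢ J) := hJcpt.prod hJcpt
  obtain ⟨⟨a, b⟩, habJ, φ₂, hφ₂, hconv⟩ := hJJ.tendsto_subseq
    (x := fun n => (ys (φ₁ n), yt (φ₁ n))) (fun n => mk_mem_prod (hysJ _) (hytJ _))
  rw [mem_prod] at habJ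
  set ψ : ℕ → ℕ := φ₁ ∘ φ₂ with hψdef
  have hψ : StrictMono ψ := hφ₁.comp hφ₂
  have hconva : Tendsto (fun n => ys (ψ n)) atTop (𝓝 a) :=
    (continuous_fst.tendsto _).comp hconv
  have hconvb : Tendsto (fun n => yt (ψ n)) atTop (𝓝 b) :=
    (continuous_snd.tendsto _).comp hconv
  have haI : a ∈ Icc (0:ℝ) 1 := hJsub habJ.1
  have hbI : b ∈ Icc (0:ℝ) 1 := hJsub habJ.2
  have hξa : Tendsto (fun n => ξ (ys (ψ n))) atTop (𝓝 (ξ a)) := by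
    refine ((hξc a haI).tendsto).comp ?_
    rw [tendsto_nhdsWithin_iff]
    exact ⟨hconva, Eventually.of_forall (fun n => hJsub (hysJ (ψ n)))⟩
  have hξb : Tendsto (fun n => ξ (yt (ψ n))) atTop (𝓝 (ξ b)) := by
    refine ((hξc b hbI).tendsto).comp ?_
    rw [tendsto_nhdsWithin_iff]
    exact ⟨hconvb, Eventually.of_forall (fun n => hJsub (hytJ (ψ n)))⟩
  have hξa0 : ξ a ≠ 0 := hξne a haI (ne_of_gt (lt_of_lt_of_le hG1pos habJ.1.1))
  have hξb0 : ξ b ≠ 0 := hξne b hbI (ne_of_gt (lt_of_lt_of_le hG1pos habJ.2.1))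
  have hξaR : ξ a ∈ R := hξim ▸ mem_image_of_mem ξ haI
  have hξbR : ξ b ∈ R := hξim ▸ mem_image_of_mem ξ hbI
  have hlim2 : Tendsto (fun n => v (ψ n) / u (ψ n)) atTop (𝓝 (μ ^ d₀ * (ξ b / ξ a))) := by
    have heqf : (fun n => v (ψ n) / u (ψ n)) =
        fun n => μ ^ d₀ * (ξ (yt (ψ n)) / ξ (ys (ψ n))) := by
      funext n
      rw [hratio (ψ n)]
      congr 2
      exact hdφ (φ₂ n)
    rw [heqf]
    exact tendsto_const_nhds.mul (hξb.div hξa hξa0)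
  have hζeq : ζ = μ ^ d₀ * (ξ b / ξ a) :=
    tendsto_nhds_unique (hr.comp hψ.tendsto_atTop) hlim2
  -- key power relation
  have hμdk : ((μ : ℂ) ^ d₀) ^ k = (lam ^ d₀)⁻¹ := by
    rw [← zpow_natCast (μ ^ d₀) k, ← zpow_mul, mul_comm, zpow_mul, zpow_natCast, hμk,
      inv_zpow]
  have hskey : (ξ b) ^ k = lam ^ d₀ * (ξ a) ^ k := by
    have h1 : (1:ℂ) = (lam ^ d₀)⁻¹ * ((ξ b) ^ k / (ξ a) ^ k) := by
      rw [← hζ, hζeq, mul_pow, div_pow, hμdk]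
    have hlamd : (lam : ℂ) ^ d₀ ≠ 0 := zpow_ne_zero _ hlam0
    field_simp at h1
    linear_combination -h1
  -- final case analysis on d₀
  have hGG1 : G (G 1) < G 1 := hGmono hG1mem h1mem hG1lt
  have hζform : ∀ (e : ℤ) (w z : ℂ), w ≠ 0 → z ≠ 0 → ζ = μ ^ e * (w / z) → μ ^ e * w = z → False := by
    intro e w z hw hz hζe hrel
    apply hζ1
    rw [hζe, ← hrel]
    field_simp
  rcases le_or_gt 0 d₀ with hd | hd
  · set n := d₀.toNat with hndef
    have hnd : (n : ℤ) = d₀ := Int.toNat_of_nonneg hd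
    have hmemt : μ ^ n * ξ b ∈ R := hμpowmem n _ hξbR
    have hpow : (μ ^ n * ξ b) ^ k = (ξ a) ^ k := by
      rw [mul_pow, ← pow_mul, mul_comm n k, pow_mul, hμk, hskey, ← hnd, zpow_natCast,
        inv_pow, ← mul_assoc, inv_mul_cancel₀ (pow_ne_zero _ hlam0), one_mul]
    have heqq : μ ^ n * ξ b = ξ a := hqinj hmemt hξaR hpow
    have hGit : G^[n] b = a := by
      apply hξi (hiter n b hbI).1 haI
      rw [(hiter n b hbI).2, heqq]
    match n, hnd, heqq, hGit with
    | 0, hnd, heqq, hGit =>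
      have hab : b = a := by simpa using hGit
      exact hζform d₀ (ξ b) (ξ a) hξb0 hξa0 hζeq (by rw [← hnd]; simpa [hab] using heqq)
    | 1, hnd, heqq, hGit =>
      exact hζform d₀ (ξ b) (ξ a) hξb0 hξa0 hζeq (by rw [← hnd]; simpa using heqq)
    | (n+2), hnd, heqq, hGit =>
      exfalso
      have h1 : G^[n+2] b ≤ G^[n+2] 1 := hiter_mono (n+2) b hbI 1 h1mem hbI.2
      have h2 : G^[n+2] 1 ≤ G^[2] 1 := hgn_anti (by omega)
      have h3 : G^[2] 1 = G (G 1) := by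
        simp [Function.iterate_succ_apply']
      have h4 : G 1 ≤ a := habJ.1.1
      rw [hGit] at h1
      linarith
  · set n := (-d₀).toNat with hndef
    have hnd : (n : ℤ) = -d₀ := Int.toNat_of_nonneg (by omega)
    have hn1 : 1 ≤ n := by omega
    have hmems : μ ^ n * ξ a ∈ R := hμpowmem n _ hξaR
    have hpow : (μ ^ n * ξ a) ^ k = (ξ b) ^ k := by
      rw [mul_pow, ← pow_mul, mul_comm n k, pow_mul, hμk, hskey, inv_pow,
        ← zpow_natCast lam n, hnd, zpow_neg, inv_inv]
    have heqq : μ ^ n * ξ a = ξ b := hqinj hmems hξbR hpow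
    have hGit : G^[n] a = b := by
      apply hξi (hiter n a haI).1 hbI
      rw [(hiter n a haI).2, heqq]
    have hζswap : ζ = μ ^ d₀ * (ξ b / ξ a) := hζeq
    match n, hn1, hnd, heqq, hGit with
    | 1, _, hnd, heqq, hGit =>
      refine hζform d₀ (ξ b) (ξ a) hξb0 hξa0 hζeq ?_
      -- μ ^ d₀ * ξ b = ξ a  with d₀ = -1, ξ b = μ * ξ a
      have hd1 : d₀ = -1 := by omega
      rw [hd1, ← heqq]
      simp [pow_one]
      field_simp
    | (n+2), _, hnd, heqq, hGit =>
      exfalso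
      have h1 : G^[n+2] a ≤ G^[n+2] 1 := hiter_mono (n+2) a haI 1 h1mem haI.2
      have h2 : G^[n+2] 1 ≤ G^[2] 1 := hgn_anti (by omega)
      have h3 : G^[2] 1 = G (G 1) := by
        simp [Function.iterate_succ_apply']
      have h4 : G 1 ≤ b := habJ.2.1
      rw [hGit] at h1
      linarith
end

section
/- Under the hypotheses of the preceding setup, the map w ↦ w^k restricted to the arc R is injective. -/
open Set

-- local injectivity of w ^ k away from 0
lemma pow_local_inj (k : ℕ) (hk : k ≠ 0) (w : ℂ) (hw : w ≠ 0) :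
    ∃ U ∈ nhds w, Set.InjOn (fun z : ℂ => z ^ k) U := by
  have hd := hasStrictDerivAt_pow k w
  have hd' : (k : ℂ) * w ^ (k - 1) ≠ 0 :=
    mul_ne_zero (Nat.cast_ne_zero.2 hk) (pow_ne_zero _ hw)
  have hev := (hd.hasStrictFDerivAt_equiv hd').eventually_left_inverse
  obtain ⟨U, hU, h⟩ := hev.exists_mem
  refine ⟨U, hU, fun x hx y hy hxy => ?_⟩
  have hx' := h x hx
  have hy' := h y hy
  simp only at hx' hy' hxy
  rw [← hx', ← hy', hxy]

-- a continuous, locally injective map on [a,b] cannot attain a max at a point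
-- different in value from the common endpoint value
lemma no_interior_max {g : ℝ → ℝ} {a b c : ℝ} (hab : a < b)
    (hg : ContinuousOn g (Icc a b))
    (hloc : ∀ x ∈ Icc a b, ∃ δ > 0, Set.InjOn g (Icc a b ∩ Metric.ball x δ))
    (hgab : g a = g b) (hc : c ∈ Icc a b)
    (hmax : ∀ x ∈ Icc a b, g x ≤ g c) (hne : g c ≠ g a) : False := by
  have hca : c ≠ a := fun h => hne (by rw [h])
  have hcb : c ≠ b := fun h => hne (by rw [h, hgab])
  have hac : a < c := lt_of_le_of_ne hc.1 (Ne.symm hca)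
  have hcbb : c < b := lt_of_le_of_ne hc.2 hcb
  obtain ⟨δ, hδ, hinj⟩ := hloc c hc
  set u := max a (c - δ / 2) with hu
  set v := min b (c + δ / 2) with hv
  have huc : u < c := max_lt hac (by linarith)
  have hcv : c < v := lt_min hcbb (by linarith)
  have huI : u ∈ Icc a b := ⟨le_max_left _ _, le_of_lt (lt_of_lt_of_le huc hc.2)⟩
  have hvI : v ∈ Icc a b := ⟨le_of_lt (lt_of_le_of_lt hc.1 hcv), min_le_left _ _⟩
  have huball : u ∈ Metric.ball c δ := by
    rw [Metric.mem_ball, Real.dist_eq, abs_lt]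
    constructor
    · have : c - δ / 2 ≤ u := le_max_right _ _
      linarith
    · linarith
  have hvball : v ∈ Metric.ball c δ := by
    rw [Metric.mem_ball, Real.dist_eq, abs_lt]
    have : v ≤ c + δ / 2 := min_le_right _ _
    constructor <;> linarith
  have hgu : g u < g c := by
    rcases lt_or_eq_of_le (hmax u huI) with h | h
    · exact h
    · exact absurd (hinj ⟨huI, huball⟩ ⟨hc, Metric.mem_ball_self hδ⟩ h) (ne_of_lt huc)
  have hgv : g v < g c := by
    rcases lt_or_eq_of_le (hmax v hvI) with h | h
    · exact h
    · exact absurd (hinj ⟨hvI, hvball⟩ ⟨hc, Metric.mem_ball_self hδ⟩ h) (ne_of_gt hcv)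
  set m := (max (g u) (g v) + g c) / 2 with hm
  have hym : max (g u) (g v) < m := by
    have := max_lt hgu hgv
    simp only [hm]; linarith
  have hmc : m < g c := by
    have := max_lt hgu hgv
    simp only [hm]; linarith
  have hsub1 : Icc u c ⊆ Icc a b := Icc_subset_Icc huI.1 hc.2
  have hsub2 : Icc c v ⊆ Icc a b := Icc_subset_Icc hc.1 hvI.2
  have h1 : m ∈ g '' Icc u c := by
    apply intermediate_value_Icc (le_of_lt huc) (hg.mono hsub1)
    exact ⟨le_of_lt (lt_of_le_of_lt (le_max_left _ _) hym), le_of_lt hmc⟩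
  have h2 : m ∈ g '' Icc c v := by
    apply intermediate_value_Icc' (le_of_lt hcv) (hg.mono hsub2)
    exact ⟨le_of_lt (lt_of_le_of_lt (le_max_right _ _) hym), le_of_lt hmc⟩
  obtain ⟨p, hp, hgp⟩ := h1
  obtain ⟨q, hq, hgq⟩ := h2
  have hpc : p < c := by
    rcases lt_or_eq_of_le hp.2 with h | h
    · exact h
    · rw [h] at hgp; exact absurd hgp.symm (ne_of_lt hmc)
  have hcq : c ≤ q := hq.1
  have hpball : p ∈ Metric.ball c δ := by
    rw [Metric.mem_ball, Real.dist_eq, abs_lt]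
    have h1 : c - δ / 2 ≤ u := le_max_right _ _
    have h2 : u ≤ p := hp.1
    constructor <;> linarith
  have hqball : q ∈ Metric.ball c δ := by
    rw [Metric.mem_ball, Real.dist_eq, abs_lt]
    have h1 : v ≤ c + δ / 2 := min_le_right _ _
    have h2 : q ≤ v := hq.2
    have h3 : c ≤ q := hq.1
    constructor <;> linarith
  have : p = q := hinj ⟨hsub1 hp, hpball⟩ ⟨hsub2 hq, hqball⟩ (by rw [hgp, hgq])
  exact absurd this (ne_of_lt (lt_of_lt_of_le hpc hcq))

theorem pow_injOn_arc'
    (k : ℕ) (hk : 1 < k) (R : Set ℂ)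
    (hR : ∃ ξ : ℝ → ℂ, ContinuousOn ξ (Icc 0 1) ∧ InjOn ξ (Icc 0 1) ∧ ξ '' Icc 0 1 = R ∧ ξ 0 = 0)
    (hR' : ∃ η : ℝ → ℂ, ContinuousOn η (Icc 0 1) ∧ InjOn η (Icc 0 1) ∧
      η '' Icc 0 1 = (fun w => w ^ k) '' R) :
    Set.InjOn (fun w => w ^ k) R := by
  classical
  obtain ⟨ξ, hξc, hξi, hξR, hξ0⟩ := hR
  obtain ⟨η, hηc, hηi, hηR⟩ := hR'
  have hk0 : k ≠ 0 := by omega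
  -- the restricted parametrization of R'
  set η' : Icc (0:ℝ) 1 → ℂ := (Icc (0:ℝ) 1).domRestrict η with hη'
  have hη'c : Continuous η' := continuousOn_iff_continuous_restrict.mp hηc
  have hη'i : Function.Injective η' := Set.injOn_iff_injective.mp hηi
  have hrange : Set.range η' = (fun w => w ^ k) '' R := by
    rw [hη', Set.range_domRestrict, hηR]
  set e : Icc (0:ℝ) 1 ≃ Set.range η' := Equiv.ofInjective η' hη'i with he
  have hec : Continuous (e : Icc (0:ℝ) 1 → Set.range η') := Continuous.subtype_mk hη'c _
  set Ψ : Icc (0:ℝ) 1 ≃ₜ Set.range η' := hec.homeoOfEquivCompactToT2 with hΨ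
  set H : Set.range η' → ℝ := fun z => (Ψ.symm z : ℝ) with hH
  have hHc : Continuous H := continuous_subtype_val.comp Ψ.symm.continuous
  have hHi : Function.Injective H := by
    intro z1 z2 h
    exact Ψ.symm.injective (Subtype.ext h)
  have hmem : ∀ t, t ∈ Icc (0:ℝ) 1 → ξ t ^ k ∈ Set.range η' := by
    intro t ht
    rw [hrange]
    exact ⟨ξ t, hξR ▸ Set.mem_image_of_mem ξ ht, rfl⟩
  set g : ℝ → ℝ := fun t => if ht : t ∈ Icc (0:ℝ) 1 then H ⟨ξ t ^ k, hmem t ht⟩ else 0 with hg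
  have hgc : ContinuousOn g (Icc (0:ℝ) 1) := by
    rw [continuousOn_iff_continuous_restrict]
    have : (Icc (0:ℝ) 1).domRestrict g = fun t : Icc (0:ℝ) 1 => H ⟨ξ t.1 ^ k, hmem t.1 t.2⟩ := by
      funext t; simp only [Set.domRestrict_apply, hg, dif_pos t.2]
    rw [this]
    exact hHc.comp (Continuous.subtype_mk
      ((continuousOn_iff_continuous_restrict.mp hξc).pow k) _)
  have key1 : ∀ a ∈ Icc (0:ℝ) 1, ∀ b ∈ Icc (0:ℝ) 1, g a = g b → ξ a ^ k = ξ b ^ k := by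
    intro a ha b hb h
    simp only [hg, dif_pos ha, dif_pos hb] at h
    exact congrArg Subtype.val (hHi h)
  have key2 : ∀ a ∈ Icc (0:ℝ) 1, ∀ b ∈ Icc (0:ℝ) 1, ξ a ^ k = ξ b ^ k → g a = g b := by
    intro a ha b hb h
    simp only [hg, dif_pos ha, dif_pos hb]
    congr 1
    exact Subtype.ext h
  -- main claim
  have main : ∀ a ∈ Icc (0:ℝ) 1, ∀ b ∈ Icc (0:ℝ) 1, a < b → ξ a ≠ 0 →
      ξ a ^ k = ξ b ^ k → False := by
    intro a ha b hb hab hξa hpow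
    have hIcc : Icc a b ⊆ Icc (0:ℝ) 1 := Icc_subset_Icc ha.1 hb.2
    have hne0 : ∀ t ∈ Icc a b, ξ t ≠ 0 := by
      intro t ht h0
      have ha0 : (0:ℝ) < a := by
        rcases lt_or_eq_of_le ha.1 with h | h
        · exact h
        · exact absurd (h ▸ hξ0 : ξ a = 0) hξa
      have ht0 : t ≠ 0 := by have := ht.1; intro h; rw [h] at this; linarith
      exact ht0 (hξi (hIcc ht) (left_mem_Icc.mpr (by norm_num)) (by rw [h0, hξ0]))
    -- local injectivity of g on Icc a b
    have hloc : ∀ c ∈ Icc a b, ∃ δ > 0, Set.InjOn g (Icc a b ∩ Metric.ball c δ) := by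
      intro c hc
      obtain ⟨U, hU, hUinj⟩ := pow_local_inj k hk0 (ξ c) (hne0 c hc)
      have hcw : ContinuousWithinAt ξ (Icc (0:ℝ) 1) c := hξc c (hIcc hc)
      have hev : ∀ᶠ t in nhdsWithin c (Icc (0:ℝ) 1), ξ t ∈ U := hcw hU
      obtain ⟨V, hVopen, hcV, hVsub⟩ := mem_nhdsWithin.mp hev
      obtain ⟨δ, hδ, hball⟩ := Metric.isOpen_iff.mp hVopen c hcV
      refine ⟨δ, hδ, fun p hp q hq hgpq => ?_⟩
      have hpU : ξ p ∈ U := hVsub ⟨hball hp.2, hIcc hp.1⟩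
      have hqU : ξ q ∈ U := hVsub ⟨hball hq.2, hIcc hq.1⟩
      have := key1 p (hIcc hp.1) q (hIcc hq.1) hgpq
      exact hξi (hIcc hp.1) (hIcc hq.1) (hUinj hpU hqU this)
    have hgab : g a = g b := key2 a (hIcc (left_mem_Icc.mpr (le_of_lt hab)))
      b (hIcc (right_mem_Icc.mpr (le_of_lt hab))) hpow
    have haI : a ∈ Icc a b := left_mem_Icc.mpr (le_of_lt hab)
    have hbI : b ∈ Icc a b := right_mem_Icc.mpr (le_of_lt hab)
    -- g is not constant on Icc a b
    have hnonconst : ∃ x ∈ Icc a b, g x ≠ g a := by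
      by_contra hcon
      push_neg at hcon
      have hroots : ∀ t ∈ Icc a b, ξ t ∈ {w : ℂ | (Polynomial.X ^ k -
          Polynomial.C (ξ a ^ k)).IsRoot w} := by
        intro t ht
        have := key1 t (hIcc ht) a (hIcc haI) (hcon t ht)
        simp [Polynomial.IsRoot, this]
      have hfin : {w : ℂ | (Polynomial.X ^ k - Polynomial.C (ξ a ^ k)).IsRoot w}.Finite :=
        Polynomial.finite_setOf_isRoot (Polynomial.monic_X_pow_sub_C _ hk0).ne_zero
      have hinf : (ξ '' Icc a b).Infinite :=
        Set.Infinite.image (fun x hx y hy => hξi (hIcc hx) (hIcc hy)) (Set.Icc_infinite hab)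
      exact (hfin.subset (Set.image_subset_iff.mpr hroots)).not_infinite hinf
    obtain ⟨x, hx, hgx⟩ := hnonconst
    have hgcont : ContinuousOn g (Icc a b) := hgc.mono hIcc
    obtain ⟨c0, hc0, hmax0⟩ := isCompact_Icc.exists_isMaxOn ⟨a, haI⟩ hgcont
    by_cases hC : g c0 = g a
    · -- use the min
      obtain ⟨c1, hc1, hmin1⟩ := isCompact_Icc.exists_isMinOn ⟨a, haI⟩ hgcont
      have hlt : g x < g a := lt_of_le_of_ne (hC ▸ hmax0 hx) hgx
      have hc1a : g c1 ≠ g a := ne_of_lt (lt_of_le_of_lt (hmin1 hx) hlt)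
      refine no_interior_max (g := fun t => -(g t)) hab hgcont.neg ?_ (by rw [hgab]) hc1
        (fun y hy => neg_le_neg (hmin1 hy)) (fun h => hc1a (neg_injective h))
      intro y hy
      obtain ⟨δ, hδ, hinj⟩ := hloc y hy
      exact ⟨δ, hδ, fun p hp q hq h => hinj hp hq (neg_injective h)⟩
    · exact no_interior_max hab hgcont hloc hgab hc0 (fun y hy => hmax0 hy) hC
  -- conclude
  intro w1 hw1 w2 hw2 hpow
  rw [← hξR] at hw1 hw2
  obtain ⟨t1, ht1, rfl⟩ := hw1
  obtain ⟨t2, ht2, rfl⟩ := hw2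
  simp only at hpow
  by_cases h1 : ξ t1 = 0
  · rw [h1] at hpow ⊢
    rw [eq_comm, zero_pow hk0, pow_eq_zero_iff hk0] at hpow
    rw [hpow]
  · by_cases h2 : ξ t2 = 0
    · rw [h2] at hpow
      rw [zero_pow hk0, pow_eq_zero_iff hk0] at hpow
      rw [hpow, h2]
    · rcases lt_trichotomy t1 t2 with h | h | h
      · exact absurd hpow (fun hp => main t1 ht1 t2 ht2 h h1 hp)
      · rw [h]
      · exact absurd hpow.symm (fun hp => main t2 ht2 t1 ht1 h h2 hp)


/-- if `R` is a simple arc with endpoint `0` and its image under `w ↦ w^k`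
(`k > 1` an integer) is also a simple arc, then `w ↦ w^k` is injective on `R`. -/
theorem pow_injOn_arc
    (k : ℕ) (hk : 1 < k) (R : Set ℂ)
    (hR : IsArcEndpoint 0 R)
    (hR' : IsSimpleArc ((fun w => w ^ k) '' R)) :
    Set.InjOn (fun w => w ^ k) R :=
  pow_injOn_arc' k hk R hR hR'
end

section
/- Let R' and L' be simple arcs in ℂ with common endpoint 0 and otherwise disjoint, and suppose λ ∈ ℂ with |λ| > 1 satisfies λR' ⊇ R' and λL' ⊇ L'. If R' ∪ L' is smooth except possibly at 0, then R' ∪ L' is a quasi-arc. -/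
open Set

lemma exists_inv (ξ : ℝ → ℂ) (hc : ContinuousOn ξ (Icc (-1:ℝ) 1)) (hi : InjOn ξ (Icc (-1:ℝ) 1)) :
    ∃ inv : ℂ → ℝ, ContinuousOn inv (ξ '' Icc (-1:ℝ) 1) ∧ (∀ t ∈ Icc (-1:ℝ) 1, inv (ξ t) = t) := by
  classical
  haveI : CompactSpace (Icc (-1:ℝ) 1) := isCompact_iff_compactSpace.mp isCompact_Icc
  set e : Icc (-1:ℝ) 1 → ℂ := (Icc (-1:ℝ) 1).restrict ξ with he
  have hecont : Continuous e := hc.restrict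
  have heinj : Function.Injective e := by
    rintro ⟨a, ha⟩ ⟨b, hb⟩ hab
    exact Subtype.ext (hi ha hb hab)
  set E : Icc (-1:ℝ) 1 ≃ range e := Equiv.ofInjective e heinj with hE
  have hEcont : Continuous (E : Icc (-1:ℝ) 1 → range e) := by
    exact Continuous.subtype_mk hecont _
  let h : Icc (-1:ℝ) 1 ≃ₜ range e := Continuous.homeoOfEquivCompactToT2 (f := E) hEcont
  have himeq : range e = ξ '' Icc (-1:ℝ) 1 := range_restrict ξ _
  set inv : ℂ → ℝ := fun z => if hz : z ∈ ξ '' Icc (-1:ℝ) 1 then ((h.symm ⟨z, himeq ▸ hz⟩ : Icc (-1:ℝ) 1) : ℝ) else 0 with hinv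
  have key : ∀ t ∈ Icc (-1:ℝ) 1, inv (ξ t) = t := by
    intro t ht
    have hz : ξ t ∈ ξ '' Icc (-1:ℝ) 1 := mem_image_of_mem ξ ht
    have : inv (ξ t) = ((h.symm ⟨ξ t, himeq ▸ hz⟩ : Icc (-1:ℝ) 1) : ℝ) := by
      simp only [hinv, dif_pos hz]
    rw [this]
    have h2 : (⟨ξ t, himeq ▸ hz⟩ : range e) = h ⟨t, ht⟩ := by
      apply Subtype.ext; rfl
    rw [h2, Homeomorph.symm_apply_apply]
  refine ⟨inv, ?_, key⟩
  rw [continuousOn_iff_continuous_restrict]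
  have : (ξ '' Icc (-1:ℝ) 1).domRestrict inv
      = (fun x : Icc (-1:ℝ) 1 => (x : ℝ)) ∘ h.symm ∘ (Homeomorph.setCongr himeq.symm) := by
    funext z
    simp only [domRestrict, Function.comp_apply]
    have hz : (z : ℂ) ∈ ξ '' Icc (-1:ℝ) 1 := z.2
    simp only [hinv, dif_pos hz]
    rfl
  rw [this]
  exact continuous_subtype_val.comp (h.symm.continuous.comp (Homeomorph.setCongr himeq.symm).continuous)


lemma seg_right (ξ : ℝ → ℂ) (v : ℂ → ℝ)
    (hi : InjOn ξ (Icc (-1:ℝ) 1))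
    (hvc : ContinuousOn v (ξ '' Icc (-1:ℝ) 1)) (hv : ∀ t ∈ Icc (-1:ℝ) 1, v (ξ t) = t)
    (S : Set ℂ) (hSsub : S ⊆ ξ '' Icc (0:ℝ) 1)
    (hScomp : IsCompact S) (hSconn : IsPreconnected S) (hS0 : ξ 0 ∈ S) :
    ∃ c ∈ Icc (0:ℝ) 1, S = ξ '' Icc 0 c := by
  have hsub01 : Icc (0:ℝ) 1 ⊆ Icc (-1:ℝ) 1 := Icc_subset_Icc (by norm_num) le_rfl
  have hSA : S ⊆ ξ '' Icc (-1:ℝ) 1 := hSsub.trans (image_mono (f := ξ) hsub01)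
  have hTsub : v '' S ⊆ Icc (0:ℝ) 1 := by
    rintro - ⟨z, hz, rfl⟩
    obtain ⟨t, ht, rfl⟩ := hSsub hz
    rw [hv t (hsub01 ht)]; exact ht
  have hTim : ξ '' (v '' S) = S := by
    apply Subset.antisymm
    · rintro - ⟨-, ⟨z, hz, rfl⟩, rfl⟩
      obtain ⟨t, ht, rfl⟩ := hSsub hz
      rw [hv t (hsub01 ht)]; exact hz
    · intro z hz
      obtain ⟨t, ht, rfl⟩ := hSsub hz
      exact ⟨t, ⟨ξ t, hz, hv t (hsub01 ht)⟩, rfl⟩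
  set T := v '' S with hT
  have hTcomp : IsCompact T := hScomp.image_of_continuousOn (hvc.mono hSA)
  have hTconn : IsPreconnected T := hSconn.image v (hvc.mono hSA)
  have h0T : (0:ℝ) ∈ T := by
    have : v (ξ 0) = 0 := hv 0 (by norm_num)
    exact ⟨ξ 0, hS0, this⟩
  have hTne : T.Nonempty := ⟨0, h0T⟩
  have hc : sSup T ∈ T := hTcomp.sSup_mem hTne
  refine ⟨sSup T, hTsub hc, ?_⟩
  have hTeq : T = Icc 0 (sSup T) := by
    apply Subset.antisymm
    · intro t ht
      exact ⟨(hTsub ht).1, le_csSup hTcomp.bddAbove ht⟩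
    · exact hTconn.Icc_subset h0T hc
  rw [← hTim, ← hTeq]

lemma seg_left (ξ : ℝ → ℂ) (v : ℂ → ℝ)
    (hi : InjOn ξ (Icc (-1:ℝ) 1))
    (hvc : ContinuousOn v (ξ '' Icc (-1:ℝ) 1)) (hv : ∀ t ∈ Icc (-1:ℝ) 1, v (ξ t) = t)
    (S : Set ℂ) (hSsub : S ⊆ ξ '' Icc (-1:ℝ) 0)
    (hScomp : IsCompact S) (hSconn : IsPreconnected S) (hS0 : ξ 0 ∈ S) :
    ∃ c ∈ Icc (-1:ℝ) 0, S = ξ '' Icc c 0 := by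
  have hsub01 : Icc (-1:ℝ) 0 ⊆ Icc (-1:ℝ) 1 := Icc_subset_Icc le_rfl (by norm_num)
  have hSA : S ⊆ ξ '' Icc (-1:ℝ) 1 := hSsub.trans (image_mono (f := ξ) hsub01)
  have hTsub : v '' S ⊆ Icc (-1:ℝ) 0 := by
    rintro - ⟨z, hz, rfl⟩
    obtain ⟨t, ht, rfl⟩ := hSsub hz
    rw [hv t (hsub01 ht)]; exact ht
  have hTim : ξ '' (v '' S) = S := by
    apply Subset.antisymm
    · rintro - ⟨-, ⟨z, hz, rfl⟩, rfl⟩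
      obtain ⟨t, ht, rfl⟩ := hSsub hz
      rw [hv t (hsub01 ht)]; exact hz
    · intro z hz
      obtain ⟨t, ht, rfl⟩ := hSsub hz
      exact ⟨t, ⟨ξ t, hz, hv t (hsub01 ht)⟩, rfl⟩
  set T := v '' S with hT
  have hTcomp : IsCompact T := hScomp.image_of_continuousOn (hvc.mono hSA)
  have hTconn : IsPreconnected T := hSconn.image v (hvc.mono hSA)
  have h0T : (0:ℝ) ∈ T := by
    have : v (ξ 0) = 0 := hv 0 (by norm_num)
    exact ⟨ξ 0, hS0, this⟩
  have hTne : T.Nonempty := ⟨0, h0T⟩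
  have hc : sInf T ∈ T := hTcomp.sInf_mem hTne
  refine ⟨sInf T, hTsub hc, ?_⟩
  have hTeq : T = Icc (sInf T) 0 := by
    apply Subset.antisymm
    · intro t ht
      exact ⟨csInf_le hTcomp.bddBelow ht, (hTsub ht).2⟩
    · exact hTconn.Icc_subset hc h0T
  rw [← hTim, ← hTeq]

lemma normalizeTriple (ξ : ℝ → ℂ) (v : ℂ → ℝ) (R' L' : Set ℂ) (lam : ℂ)
    (hlam : 1 < ‖lam‖)
    (hinvR : R' ⊆ (fun z => lam * z) '' R') (hinvL : L' ⊆ (fun z => lam * z) '' L')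
    (hc : ContinuousOn ξ (Icc (-1:ℝ) 1)) (hi : InjOn ξ (Icc (-1:ℝ) 1))
    (hvc : ContinuousOn v (ξ '' Icc (-1:ℝ) 1)) (hv : ∀ t ∈ Icc (-1:ℝ) 1, v (ξ t) = t)
    (hξ0 : ξ 0 = 0) (hξR : ξ '' Icc (0:ℝ) 1 = R') (hξL : ξ '' Icc (-1:ℝ) 0 = L') :
    ∃ r1 l1 : ℝ, 0 < r1 ∧ r1 ≤ 1 ∧ -1 ≤ l1 ∧ l1 < 0 ∧
      ∀ s t u : ℝ, s ∈ Icc (-1:ℝ) 1 → u ∈ Icc (-1:ℝ) 1 → s ≤ t → t ≤ u → s < u →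
        ∃ (k : ℕ) (s' t' u' : ℝ), s' ∈ Icc (-1:ℝ) 1 ∧ t' ∈ Icc (-1:ℝ) 1 ∧ u' ∈ Icc (-1:ℝ) 1 ∧
          s' ≤ t' ∧ t' ≤ u' ∧ (r1 < u' ∨ s' < l1) ∧
          ξ s' = lam ^ k * ξ s ∧ ξ t' = lam ^ k * ξ t ∧ ξ u' = lam ^ k * ξ u := by
  classical
  have hmem0 : (0:ℝ) ∈ Icc (-1:ℝ) 1 := by norm_num
  have hmem1 : (1:ℝ) ∈ Icc (-1:ℝ) 1 := by norm_num
  have hmemm1 : (-1:ℝ) ∈ Icc (-1:ℝ) 1 := by norm_num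
  have hsubR : Icc (0:ℝ) 1 ⊆ Icc (-1:ℝ) 1 := Icc_subset_Icc (by norm_num) le_rfl
  have hsubL : Icc (-1:ℝ) 0 ⊆ Icc (-1:ℝ) 1 := Icc_subset_Icc le_rfl (by norm_num)
  have hlam0 : lam ≠ 0 := by
    intro h; rw [h] at hlam; simp at hlam; linarith
  have hlamk0 : ∀ k : ℕ, lam ^ k ≠ 0 := fun k => pow_ne_zero k hlam0
  have hξ10 : ξ 1 ≠ 0 := by
    intro h
    have := hi hmem1 hmem0 (by rw [h, hξ0])
    norm_num at this
  have hξm10 : ξ (-1) ≠ 0 := by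
    intro h
    have := hi hmemm1 hmem0 (by rw [h, hξ0])
    norm_num at this
  have h0R : (0:ℂ) ∈ R' := by rw [← hξR]; exact ⟨0, by norm_num, hξ0⟩
  have h0L : (0:ℂ) ∈ L' := by rw [← hξL]; exact ⟨0, by norm_num, hξ0⟩
  have hcontrR : ∀ z ∈ R', lam⁻¹ * z ∈ R' := by
    intro z hz
    obtain ⟨w, hw, hwz⟩ := hinvR hz
    simp only at hwz
    have : lam⁻¹ * z = w := by rw [← hwz]; field_simp
    rw [this]; exact hw
  have hcontrL : ∀ z ∈ L', lam⁻¹ * z ∈ L' := by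
    intro z hz
    obtain ⟨w, hw, hwz⟩ := hinvL hz
    simp only at hwz
    have : lam⁻¹ * z = w := by rw [← hwz]; field_simp
    rw [this]; exact hw
  -- the scaled sets
  set S : ℕ → Set ℂ := fun k => (fun z => (lam ^ k)⁻¹ * z) '' R' with hS
  set S' : ℕ → Set ℂ := fun k => (fun z => (lam ^ k)⁻¹ * z) '' L' with hS'
  have hSmem : ∀ (k : ℕ) (z : ℂ), z ∈ S k ↔ lam ^ k * z ∈ R' := by
    intro k z
    constructor
    · rintro ⟨w, hw, rfl⟩
      have : lam ^ k * ((lam ^ k)⁻¹ * w) = w := by field_simp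
      rw [this]; exact hw
    · intro h
      exact ⟨lam ^ k * z, h, by field_simp⟩
  have hS'mem : ∀ (k : ℕ) (z : ℂ), z ∈ S' k ↔ lam ^ k * z ∈ L' := by
    intro k z
    constructor
    · rintro ⟨w, hw, rfl⟩
      have : lam ^ k * ((lam ^ k)⁻¹ * w) = w := by field_simp
      rw [this]; exact hw
    · intro h
      exact ⟨lam ^ k * z, h, by field_simp⟩
  have hSsubR : ∀ k, S k ⊆ R' := by
    intro k
    induction k with
    | zero => intro z hz; rw [hSmem 0 z] at hz; simpa using hz
    | succ k ih =>
      intro z hz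
      rw [hSmem] at hz
      apply ih
      rw [hSmem]
      have : lam ^ k * z = lam⁻¹ * (lam ^ (k+1) * z) := by
        field_simp; ring
      rw [this]
      exact hcontrR _ hz
  have hS'subL : ∀ k, S' k ⊆ L' := by
    intro k
    induction k with
    | zero => intro z hz; rw [hS'mem 0 z] at hz; simpa using hz
    | succ k ih =>
      intro z hz
      rw [hS'mem] at hz
      apply ih
      rw [hS'mem]
      have : lam ^ k * z = lam⁻¹ * (lam ^ (k+1) * z) := by
        field_simp; ring
      rw [this]
      exact hcontrL _ hz
  -- compactness / connectedness
  have hRcomp : IsCompact R' := by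
    rw [← hξR]; exact isCompact_Icc.image_of_continuousOn (hc.mono hsubR)
  have hRconn : IsPreconnected R' := by
    rw [← hξR]; exact (isPreconnected_Icc).image ξ (hc.mono hsubR)
  have hLcomp : IsCompact L' := by
    rw [← hξL]; exact isCompact_Icc.image_of_continuousOn (hc.mono hsubL)
  have hLconn : IsPreconnected L' := by
    rw [← hξL]; exact (isPreconnected_Icc).image ξ (hc.mono hsubL)
  have hmulc : ∀ k : ℕ, Continuous (fun z : ℂ => (lam ^ k)⁻¹ * z) := fun k =>
    continuous_const.mul continuous_id
  have hScomp : ∀ k, IsCompact (S k) := fun k => hRcomp.image (hmulc k)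
  have hSconn : ∀ k, IsPreconnected (S k) := fun k => hRconn.image _ (hmulc k).continuousOn
  have hS'comp : ∀ k, IsCompact (S' k) := fun k => hLcomp.image (hmulc k)
  have hS'conn : ∀ k, IsPreconnected (S' k) := fun k => hLconn.image _ (hmulc k).continuousOn
  have hS0mem : ∀ k, ξ 0 ∈ S k := by
    intro k; rw [hξ0, hSmem]; simpa using h0R
  have hS'0mem : ∀ k, ξ 0 ∈ S' k := by
    intro k; rw [hξ0, hS'mem]; simpa using h0L
  -- the radii
  have hrex : ∀ k, ∃ c ∈ Icc (0:ℝ) 1, S k = ξ '' Icc 0 c := by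
    intro k
    apply seg_right ξ v hi hvc hv (S k) _ (hScomp k) (hSconn k) (hS0mem k)
    rw [hξR]; exact hSsubR k
  have hlex : ∀ k, ∃ c ∈ Icc (-1:ℝ) 0, S' k = ξ '' Icc c 0 := by
    intro k
    apply seg_left ξ v hi hvc hv (S' k) _ (hS'comp k) (hS'conn k) (hS'0mem k)
    rw [hξL]; exact hS'subL k
  choose r hrmem hrS using hrex
  choose l hlmem hlS using hlex
  -- r 0 = 1, l 0 = -1
  have hS0 : S 0 = R' := by
    ext z; rw [hSmem]; simp
  have hS'0 : S' 0 = L' := by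
    ext z; rw [hS'mem]; simp
  have hr0 : r 0 = 1 := by
    have h1 : ξ 1 ∈ ξ '' Icc 0 (r 0) := by
      rw [← hrS 0, hS0, ← hξR]; exact ⟨1, by norm_num, rfl⟩
    obtain ⟨w, hw, hweq⟩ := h1
    have hwI : w ∈ Icc (-1:ℝ) 1 := ⟨by linarith [hw.1], le_trans hw.2 (hrmem 0).2⟩
    have hw1 : w = 1 := hi hwI hmem1 hweq
    exact le_antisymm (hrmem 0).2 (hw1 ▸ hw.2)
  have hl0 : l 0 = -1 := by
    have h1 : ξ (-1) ∈ ξ '' Icc (l 0) 0 := by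
      rw [← hlS 0, hS'0, ← hξL]; exact ⟨-1, by norm_num, rfl⟩
    obtain ⟨w, hw, hweq⟩ := h1
    have hwI : w ∈ Icc (-1:ℝ) 1 := ⟨le_trans (hlmem 0).1 hw.1, by linarith [hw.2]⟩
    have hw1 : w = -1 := hi hwI hmemm1 hweq
    exact le_antisymm (hw1 ▸ hw.1) (hlmem 0).1
  -- positivity of radii
  have hrpos : ∀ k, 0 < r k := by
    intro k
    have hz : (lam ^ k)⁻¹ * ξ 1 ∈ S k := ⟨ξ 1, by rw [← hξR]; exact ⟨1, by norm_num, rfl⟩, rfl⟩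
    rw [hrS k] at hz
    obtain ⟨w, hw, hweq⟩ := hz
    have hzne : (lam ^ k)⁻¹ * ξ 1 ≠ 0 := mul_ne_zero (inv_ne_zero (hlamk0 k)) hξ10
    have hwne : w ≠ 0 := by
      intro h; rw [h, hξ0] at hweq; exact hzne hweq.symm
    have : 0 < w := lt_of_le_of_ne hw.1 (Ne.symm hwne)
    linarith [hw.2]
  have hlneg : ∀ k, l k < 0 := by
    intro k
    have hz : (lam ^ k)⁻¹ * ξ (-1) ∈ S' k := ⟨ξ (-1), by rw [← hξL]; exact ⟨-1, by norm_num, rfl⟩, rfl⟩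
    rw [hlS k] at hz
    obtain ⟨w, hw, hweq⟩ := hz
    have hzne : (lam ^ k)⁻¹ * ξ (-1) ≠ 0 := mul_ne_zero (inv_ne_zero (hlamk0 k)) hξm10
    have hwne : w ≠ 0 := by
      intro h; rw [h, hξ0] at hweq; exact hzne hweq.symm
    have : w < 0 := lt_of_le_of_ne hw.2 hwne
    linarith [hw.1]
  -- bound on |ξ|
  obtain ⟨t₀, ht₀, hBle0'⟩ := isCompact_Icc.exists_isMaxOn
    (nonempty_Icc.mpr (by norm_num : (-1:ℝ) ≤ 1))
    (continuous_norm.comp_continuousOn hc)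
  have hBle0 := isMaxOn_iff.mp hBle0'
  set B : ℝ := ‖ξ t₀‖ + 1 with hBdef
  have hBpos : 0 < B := by positivity
  have hBle : ∀ t ∈ Icc (-1:ℝ) 1, ‖ξ t‖ ≤ B := by
    intro t ht
    have := hBle0 t ht
    simp only [Function.comp] at this
    linarith
  have hinvlt : (‖lam‖)⁻¹ < 1 := by
    rw [inv_lt_one_iff₀]
    right; exact hlam
  -- escape lemmas
  have hresc : ∀ u : ℝ, 0 < u → u ≤ 1 → ∃ j, r j < u := by
    intro u hu0 hu1
    obtain ⟨t₁, ht₁, hmin'⟩ := isCompact_Icc.exists_isMinOn (nonempty_Icc.mpr hu1)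
      (continuous_norm.comp_continuousOn (hc.mono (Icc_subset_Icc (by linarith) le_rfl)))
    have hmin := isMinOn_iff.mp hmin'
    have ht₁I : t₁ ∈ Icc (-1:ℝ) 1 := ⟨by linarith [ht₁.1], ht₁.2⟩
    have hcpos : 0 < ‖ξ t₁‖ := by
      rw [norm_pos_iff]
      intro h
      have ht10 := hi ht₁I hmem0 (by rw [h, hξ0])
      linarith [ht₁.1]
    obtain ⟨j, hj⟩ := exists_pow_lt_of_lt_one (div_pos hcpos hBpos) hinvlt
    refine ⟨j, ?_⟩
    by_contra hle
    push_neg at hle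
    have hrjI : r j ∈ Icc u 1 := ⟨hle, (hrmem j).2⟩
    have hξrj : ξ (r j) ∈ S j := by
      rw [hrS j]; exact mem_image_of_mem _ ⟨(hrpos j).le, le_rfl⟩
    obtain ⟨w, hw, hweq⟩ := hξrj
    have hwB : ‖w‖ ≤ B := by
      rw [← hξR] at hw; obtain ⟨a, ha, rfl⟩ := hw; exact hBle a (hsubR ha)
    have hub : ‖ξ (r j)‖ ≤ (‖lam‖)⁻¹ ^ j * B := by
      rw [← hweq, norm_mul, norm_inv, norm_pow, ← inv_pow]
      exact mul_le_mul_of_nonneg_left hwB (by positivity)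
    have hge : ‖ξ t₁‖ ≤ ‖ξ (r j)‖ := hmin (r j) hrjI
    have hlt : (‖lam‖)⁻¹ ^ j * B < ‖ξ t₁‖ :=
      (lt_div_iff₀ hBpos).mp hj
    linarith
  have hlesc : ∀ s : ℝ, -1 ≤ s → s < 0 → ∃ j, s < l j := by
    intro s hs1 hs0
    obtain ⟨t₁, ht₁, hmin'⟩ := isCompact_Icc.exists_isMinOn (nonempty_Icc.mpr hs1)
      (continuous_norm.comp_continuousOn (hc.mono (Icc_subset_Icc le_rfl (by linarith))))
    have hmin := isMinOn_iff.mp hmin'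
    have ht₁I : t₁ ∈ Icc (-1:ℝ) 1 := ⟨ht₁.1, by linarith [ht₁.2]⟩
    have hcpos : 0 < ‖ξ t₁‖ := by
      rw [norm_pos_iff]
      intro h
      have ht10 := hi ht₁I hmem0 (by rw [h, hξ0])
      linarith [ht₁.2]
    obtain ⟨j, hj⟩ := exists_pow_lt_of_lt_one (div_pos hcpos hBpos) hinvlt
    refine ⟨j, ?_⟩
    by_contra hle
    push_neg at hle
    have hljI : l j ∈ Icc (-1:ℝ) s := ⟨(hlmem j).1, hle⟩
    have hξlj : ξ (l j) ∈ S' j := by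
      rw [hlS j]; exact mem_image_of_mem _ ⟨le_rfl, (hlneg j).le⟩
    obtain ⟨w, hw, hweq⟩ := hξlj
    have hwB : ‖w‖ ≤ B := by
      rw [← hξL] at hw; obtain ⟨a, ha, rfl⟩ := hw; exact hBle a (hsubL ha)
    have hub : ‖ξ (l j)‖ ≤ (‖lam‖)⁻¹ ^ j * B := by
      rw [← hweq, norm_mul, norm_inv, norm_pow, ← inv_pow]
      exact mul_le_mul_of_nonneg_left hwB (by positivity)
    have hge : ‖ξ t₁‖ ≤ ‖ξ (l j)‖ := hmin (l j) hljI
    have hlt : (‖lam‖)⁻¹ ^ j * B < ‖ξ t₁‖ :=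
      (lt_div_iff₀ hBpos).mp hj
    linarith
  -- the rescaling maps
  set H : ℕ → ℝ → ℝ := fun k a => v (lam ^ k * ξ a) with hHdef
  have hIcclr : ∀ k, Icc (l k) (r k) ⊆ Icc (-1:ℝ) 1 := fun k =>
    Icc_subset_Icc (hlmem k).1 (hrmem k).2
  have hkey : ∀ (k : ℕ), ∀ a ∈ Icc (l k) (r k),
      lam ^ k * ξ a ∈ ξ '' Icc (-1:ℝ) 1 ∧ ξ (H k a) = lam ^ k * ξ a ∧ H k a ∈ Icc (-1:ℝ) 1 := by
    intro k a ha
    have hmem : lam ^ k * ξ a ∈ ξ '' Icc (-1:ℝ) 1 := by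
      rcases le_or_gt a 0 with h0 | h0
      · have h1 : ξ a ∈ S' k := by rw [hlS k]; exact mem_image_of_mem _ ⟨ha.1, h0⟩
        have h2 : lam ^ k * ξ a ∈ L' := (hS'mem k _).mp h1
        rw [← hξL] at h2
        exact image_mono (f := ξ) hsubL h2
      · have h1 : ξ a ∈ S k := by rw [hrS k]; exact mem_image_of_mem _ ⟨h0.le, ha.2⟩
        have h2 : lam ^ k * ξ a ∈ R' := (hSmem k _).mp h1
        rw [← hξR] at h2
        exact image_mono (f := ξ) hsubR h2
    obtain ⟨w, hwI, hweq⟩ := hmem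
    have hHw : H k a = w := by
      show v (lam ^ k * ξ a) = w
      rw [← hweq, hv w hwI]
    exact ⟨⟨w, hwI, hweq⟩, by rw [hHw, hweq], hHw ▸ hwI⟩
  have hsignR : ∀ (k : ℕ) (a : ℝ), a ∈ Icc 0 (r k) → H k a ∈ Icc (0:ℝ) 1 := by
    intro k a ha
    have hmem : ξ a ∈ S k := by rw [hrS k]; exact mem_image_of_mem _ ha
    have hR : lam ^ k * ξ a ∈ R' := (hSmem k _).mp hmem
    rw [← hξR] at hR
    obtain ⟨w, hw, hweq⟩ := hR
    have hHw : H k a = w := by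
      show v (lam ^ k * ξ a) = w
      rw [← hweq, hv w (hsubR hw)]
    rw [hHw]; exact hw
  have hsignL : ∀ (k : ℕ) (a : ℝ), a ∈ Icc (l k) 0 → H k a ∈ Icc (-1:ℝ) 0 := by
    intro k a ha
    have hmem : ξ a ∈ S' k := by rw [hlS k]; exact mem_image_of_mem _ ha
    have hL : lam ^ k * ξ a ∈ L' := (hS'mem k _).mp hmem
    rw [← hξL] at hL
    obtain ⟨w, hw, hweq⟩ := hL
    have hHw : H k a = w := by
      show v (lam ^ k * ξ a) = w
      rw [← hweq, hv w (hsubL hw)]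
    rw [hHw]; exact hw
  have hHmono : ∀ k, MonotoneOn (H k) (Icc (l k) (r k)) := by
    intro k
    have hlk := hlneg k
    have hrk := hrpos k
    have hlrle : l k ≤ r k := by linarith
    have hcont : ContinuousOn (H k) (Icc (l k) (r k)) := by
      have hg : ContinuousOn (fun a => lam ^ k * ξ a) (Icc (l k) (r k)) :=
        continuousOn_const.mul (hc.mono (hIcclr k))
      have hmaps : MapsTo (fun a => lam ^ k * ξ a) (Icc (l k) (r k)) (ξ '' Icc (-1:ℝ) 1) :=
        fun a ha => (hkey k a ha).1
      exact hvc.comp hg hmaps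
    have hinj : InjOn (H k) (Icc (l k) (r k)) := by
      intro a ha b hb hab
      have h1 := (hkey k a ha).2.1
      have h2 := (hkey k b hb).2.1
      have h3 : lam ^ k * ξ a = lam ^ k * ξ b := by rw [← h1, ← h2, hab]
      have h4 := mul_left_cancel₀ (hlamk0 k) h3
      exact hi (hIcclr k ha) (hIcclr k hb) h4
    rcases ContinuousOn.strictMonoOn_of_injOn_Icc' hlrle hcont hinj with hm | hanti
    · exact hm.monotoneOn
    · exfalso
      have h1 : H k (l k) ∈ Icc (-1:ℝ) 0 := hsignL k _ ⟨le_rfl, hlk.le⟩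
      have h2 : H k (r k) ∈ Icc (0:ℝ) 1 := hsignR k _ ⟨hrk.le, le_rfl⟩
      have h3 := hanti ⟨le_rfl, hlrle⟩ ⟨hlrle, le_rfl⟩ (by linarith : l k < r k)
      linarith [h1.2, h2.1]
  -- the main normalization
  refine ⟨r 1, l 1, hrpos 1, (hrmem 1).2, (hlmem 1).1, hlneg 1, ?_⟩
  intro s t u hsI huI hst htu hsu
  have hPex : ∃ j, r j < u ∨ s < l j := by
    rcases lt_or_ge 0 u with hu0 | hu0
    · obtain ⟨j, hj⟩ := hresc u hu0 huI.2
      exact ⟨j, Or.inl hj⟩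
    · have hs0 : s < 0 := lt_of_lt_of_le hsu hu0
      obtain ⟨j, hj⟩ := hlesc s hsI.1 hs0
      exact ⟨j, Or.inr hj⟩
  have hPn := Nat.find_spec hPex
  have hn0 : Nat.find hPex ≠ 0 := by
    intro h
    rw [h] at hPn
    rcases hPn with h1 | h1
    · rw [hr0] at h1; linarith [huI.2]
    · rw [hl0] at h1; linarith [hsI.1]
  set k := Nat.find hPex - 1 with hkdef
  have hkn : k < Nat.find hPex := Nat.pred_lt hn0
  have hkP := Nat.find_min hPex hkn
  have hk1 : k + 1 = Nat.find hPex := Nat.succ_pred_eq_of_ne_zero hn0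
  have hPk1 : r (k+1) < u ∨ s < l (k+1) := by rw [hk1]; exact hPn
  push_neg at hkP
  obtain ⟨hur, hsl⟩ := hkP
  have hsmem : s ∈ Icc (l k) (r k) := ⟨hsl, le_trans hst (le_trans htu hur)⟩
  have htmem : t ∈ Icc (l k) (r k) := ⟨le_trans hsl hst, le_trans htu hur⟩
  have humem : u ∈ Icc (l k) (r k) := ⟨le_trans hsl (le_trans hst htu), hur⟩
  have hs' := hkey k s hsmem
  have ht' := hkey k t htmem
  have hu' := hkey k u humem
  refine ⟨k, H k s, H k t, H k u, hs'.2.2, ht'.2.2, hu'.2.2,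
    hHmono k hsmem htmem hst, hHmono k htmem humem htu, ?_, hs'.2.1, ht'.2.1, hu'.2.1⟩
  rcases hPk1 with hru | hsl'
  · left
    have hu0 : 0 < u := lt_of_le_of_lt (hrmem (k+1)).1 hru
    by_contra hle
    push_neg at hle
    have hHu : H k u ∈ Icc (0:ℝ) 1 := hsignR k u ⟨hu0.le, hur⟩
    have hmemS1 : ξ (H k u) ∈ S 1 := by
      rw [hrS 1]; exact mem_image_of_mem _ ⟨hHu.1, hle⟩
    have h2 : lam ^ 1 * ξ (H k u) ∈ R' := (hSmem 1 _).mp hmemS1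
    rw [hu'.2.1] at h2
    have hmemk1 : ξ u ∈ S (k+1) := by
      rw [hSmem]
      have heq : lam ^ (k+1) * ξ u = lam ^ 1 * (lam ^ k * ξ u) := by ring
      rw [heq]; exact h2
    rw [hrS (k+1)] at hmemk1
    obtain ⟨w, hw, hweq⟩ := hmemk1
    have hwI : w ∈ Icc (-1:ℝ) 1 := ⟨by linarith [hw.1], le_trans hw.2 (hrmem (k+1)).2⟩
    have hwu : w = u := hi hwI huI hweq
    rw [hwu] at hw
    linarith [hw.2]
  · right
    have hs0 : s < 0 := lt_of_lt_of_le hsl' (hlmem (k+1)).2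
    by_contra hle
    push_neg at hle
    have hHs : H k s ∈ Icc (-1:ℝ) 0 := hsignL k s ⟨hsl, hs0.le⟩
    have hmemS1 : ξ (H k s) ∈ S' 1 := by
      rw [hlS 1]; exact mem_image_of_mem _ ⟨hle, hHs.2⟩
    have h2 : lam ^ 1 * ξ (H k s) ∈ L' := (hS'mem 1 _).mp hmemS1
    rw [hs'.2.1] at h2
    have hmemk1 : ξ s ∈ S' (k+1) := by
      rw [hS'mem]
      have heq : lam ^ (k+1) * ξ s = lam ^ 1 * (lam ^ k * ξ s) := by ring
      rw [heq]; exact h2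
    rw [hlS (k+1)] at hmemk1
    obtain ⟨w, hw, hweq⟩ := hmemk1
    have hwI : w ∈ Icc (-1:ℝ) 1 := ⟨le_trans (hlmem (k+1)).1 hw.1, by linarith [hw.2]⟩
    have hws : w = s := hi hwI hsI hweq
    rw [hws] at hw
    linarith [hw.1]


lemma bilip (ξ : ℝ → ℂ) (a b : ℝ) (hab : a ≤ b)
    (hd : ∀ t ∈ Icc a b, HasDerivAt ξ (deriv ξ t) t ∧ deriv ξ t ≠ 0)
    (hdc : ContinuousOn (deriv ξ) (Icc a b)) :
    ∃ m M δ₀ : ℝ, 0 < m ∧ 0 < M ∧ 0 < δ₀ ∧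
      ∀ x ∈ Icc a b, ∀ y ∈ Icc a b,
        ‖ξ y - ξ x‖ ≤ M * |y - x| ∧
        (|y - x| ≤ δ₀ → m * |y - x| ≤ ‖ξ y - ξ x‖) := by
  have hne : (Icc a b).Nonempty := nonempty_Icc.mpr hab
  obtain ⟨t₀, ht₀, hmin'⟩ := isCompact_Icc.exists_isMinOn hne
    (continuous_norm.comp_continuousOn hdc)
  have hmin := isMinOn_iff.mp hmin'
  obtain ⟨t₁, ht₁, hmax'⟩ := isCompact_Icc.exists_isMaxOn hne
    (continuous_norm.comp_continuousOn hdc)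
  have hmax := isMaxOn_iff.mp hmax'
  set m₀ : ℝ := ‖deriv ξ t₀‖ with hm₀
  set M₀ : ℝ := ‖deriv ξ t₁‖ with hM₀
  have hm₀pos : 0 < m₀ := by
    rw [hm₀, norm_pos_iff]
    exact (hd t₀ ht₀).2
  have hM₀pos : 0 < M₀ := lt_of_lt_of_le hm₀pos (hmax t₀ ht₀)
  -- uniform continuity of deriv ξ
  have huc := isCompact_Icc.uniformContinuousOn_of_continuous hdc
  rw [Metric.uniformContinuousOn_iff] at huc
  obtain ⟨δ₁, hδ₁, huc⟩ := huc (m₀/2) (by positivity)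
  refine ⟨m₀/2, M₀, δ₁/2, by positivity, hM₀pos, by positivity, ?_⟩
  intro x hx y hy
  constructor
  · -- upper bound
    have := Convex.norm_image_sub_le_of_norm_hasDerivWithin_le
      (f := ξ) (f' := deriv ξ) (s := Icc a b)
      (fun t ht => (hd t ht).1.hasDerivWithinAt)
      (fun t ht => by exact hmax t ht)
      (convex_Icc a b) hx hy
    rwa [Real.norm_eq_abs] at this
  · intro hxy
    set s' : Set ℝ := Icc (min x y) (max x y) with hs'
    have hs'sub : s' ⊆ Icc a b := by
      apply Icc_subset_Icc
      · exact le_min hx.1 hy.1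
      · exact max_le hx.2 hy.2
    have hxs' : x ∈ s' := ⟨min_le_left x y, le_max_left x y⟩
    have hys' : y ∈ s' := ⟨min_le_right x y, le_max_right x y⟩
    have hdist : ∀ t ∈ s', dist t x < δ₁ := by
      intro t ht
      rw [hs', mem_Icc] at ht
      have h3 : |t - x| ≤ |y - x| := by
        rw [abs_le]
        rcases le_total x y with h | h
        · rw [min_eq_left h, max_eq_right h] at ht
          rw [abs_of_nonneg (by linarith : (0:ℝ) ≤ y - x)]
          constructor <;> linarith [ht.1, ht.2]
        · rw [min_eq_right h, max_eq_left h] at ht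
          rw [abs_of_nonpos (by linarith : y - x ≤ 0)]
          constructor <;> linarith [ht.1, ht.2]
      rw [Real.dist_eq]
      linarith
    have hbound : ∀ t ∈ s', ‖deriv ξ t - deriv ξ x‖ ≤ m₀/2 := by
      intro t ht
      have := huc t (hs'sub ht) x hx (hdist t ht)
      rw [dist_eq_norm] at this
      linarith
    have hg : ∀ t ∈ s', HasDerivWithinAt (fun t => ξ t - t • deriv ξ x)
        (deriv ξ t - deriv ξ x) s' t := by
      intro t ht
      have h1 : HasDerivWithinAt ξ (deriv ξ t) s' t := (hd t (hs'sub ht)).1.hasDerivWithinAt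
      have h2 : HasDerivWithinAt (fun u : ℝ => u • deriv ξ x) ((1:ℝ) • deriv ξ x) s' t :=
        (hasDerivAt_id t).smul_const (deriv ξ x) |>.hasDerivWithinAt
      have h3 := h1.sub h2
      rw [one_smul] at h3
      exact h3
    have hmvt := Convex.norm_image_sub_le_of_norm_hasDerivWithin_le
      (f := fun t => ξ t - t • deriv ξ x) (f' := fun t => deriv ξ t - deriv ξ x) (s := s')
      hg hbound (convex_Icc _ _) hxs' hys'
    have heq : (fun t : ℝ => ξ t - t • deriv ξ x) y - (fun t : ℝ => ξ t - t • deriv ξ x) x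
        = (ξ y - ξ x) - (y - x) • deriv ξ x := by
      simp only
      module
    rw [heq] at hmvt
    have h4 : ‖(y - x) • deriv ξ x‖ - ‖ξ y - ξ x‖ ≤ ‖(ξ y - ξ x) - (y - x) • deriv ξ x‖ := by
      have h := norm_sub_norm_le ((y - x) • deriv ξ x) (ξ y - ξ x)
      have h2 : ‖(y - x) • deriv ξ x - (ξ y - ξ x)‖ = ‖ξ y - ξ x - (y - x) • deriv ξ x‖ :=
        norm_sub_rev _ _
      linarith
    have hnsmul : ‖(y - x) • deriv ξ x‖ = |y - x| * ‖deriv ξ x‖ := by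
      rw [norm_smul, Real.norm_eq_abs]
    have hmx : m₀ ≤ ‖deriv ξ x‖ := hmin x hx
    have h6 : |y - x| * m₀ ≤ |y - x| * ‖deriv ξ x‖ :=
      mul_le_mul_of_nonneg_left hmx (abs_nonneg _)
    rw [Real.norm_eq_abs] at hmvt
    linarith [hmvt, h4, hnsmul, h6]


lemma farlb (ξ : ℝ → ℂ) (hc : ContinuousOn ξ (Icc (-1:ℝ) 1)) (hi : InjOn ξ (Icc (-1:ℝ) 1))
    (δ : ℝ) (hδ : 0 < δ) (hδ1 : δ ≤ 1) :
    ∃ ε > 0, ∀ x ∈ Icc (-1:ℝ) 1, ∀ y ∈ Icc (-1:ℝ) 1, δ ≤ |y - x| →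
      ε ≤ ‖ξ y - ξ x‖ := by
  set K : Set (ℝ × ℝ) := (Icc (-1:ℝ) 1 ×ˢ Icc (-1:ℝ) 1) ∩ {p | δ ≤ |p.2 - p.1|} with hK
  have hKcomp : IsCompact K := by
    apply (isCompact_Icc.prod isCompact_Icc).of_isClosed_subset
    · apply IsClosed.inter (isClosed_Icc.prod isClosed_Icc)
      exact isClosed_le continuous_const ((continuous_snd.sub continuous_fst).abs)
    · exact inter_subset_left
  have hKne : K.Nonempty := by
    refine ⟨(-1, 0), ⟨⟨by norm_num, by norm_num⟩, ?_⟩⟩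
    simp only [mem_setOf_eq]
    rw [show (0:ℝ) - (-1) = 1 by norm_num, abs_one]
    exact hδ1
  have hfc : ContinuousOn (fun p : ℝ × ℝ => ‖ξ p.2 - ξ p.1‖) K := by
    apply continuous_norm.comp_continuousOn
    apply ContinuousOn.sub
    · exact hc.comp continuous_snd.continuousOn (fun p hp => hp.1.2)
    · exact hc.comp continuous_fst.continuousOn (fun p hp => hp.1.1)
  obtain ⟨p₀, hp₀, hmin'⟩ := hKcomp.exists_isMinOn hKne hfc
  have hmin := isMinOn_iff.mp hmin'
  refine ⟨‖ξ p₀.2 - ξ p₀.1‖, ?_, ?_⟩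
  · rw [gt_iff_lt, norm_pos_iff]
    intro h
    have hne : p₀.1 ≠ p₀.2 := by
      intro h'
      have := hp₀.2
      simp only [mem_setOf_eq, h', sub_self, abs_zero] at this
      linarith
    have heq := hi hp₀.1.2 hp₀.1.1 (by rwa [sub_eq_zero] at h)
    exact hne heq.symm
  · intro x hx y hy hxy
    exact hmin (x, y) ⟨⟨hx, hy⟩, hxy⟩

lemma keyG (ξ : ℝ → ℂ) (R' L' : Set ℂ) (lam : ℂ)
    (hlam : 1 < ‖lam‖)
    (hinvR : R' ⊆ (fun z => lam * z) '' R') (hinvL : L' ⊆ (fun z => lam * z) '' L')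
    (hc : ContinuousOn ξ (Icc (-1:ℝ) 1)) (hi : InjOn ξ (Icc (-1:ℝ) 1))
    (hξ0 : ξ 0 = 0) (hξR : ξ '' Icc (0:ℝ) 1 = R') (hξL : ξ '' Icc (-1:ℝ) 0 = L')
    (hd : ∀ t ∈ Icc (-1:ℝ) 1, t ≠ 0 → HasDerivAt ξ (deriv ξ t) t ∧ deriv ξ t ≠ 0)
    (hdc : ContinuousOn (deriv ξ) (Icc (-1:ℝ) 1 \ {0})) :
    ∃ C : ℝ, 0 < C ∧ ∀ s t u : ℝ, s ∈ Icc (-1:ℝ) 1 → t ∈ Icc (-1:ℝ) 1 → u ∈ Icc (-1:ℝ) 1 →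
      s ≤ t → t ≤ u →
      C * ‖ξ s - ξ t‖ ≤ ‖ξ s - ξ u‖ ∧
      C * ‖ξ t - ξ u‖ ≤ ‖ξ s - ξ u‖ := by
  have habs_comm : ∀ z w : ℂ, ‖z - w‖ = ‖w - z‖ := by
    intro z w
    rw [norm_sub_rev]
  obtain ⟨v, hvc, hv⟩ := exists_inv ξ hc hi
  obtain ⟨r1, l1, hr1pos, hr1le, hl1ge, hl1neg, hnorm⟩ :=
    normalizeTriple ξ v R' L' lam hlam hinvR hinvL hc hi hvc hv hξ0 hξR hξL
  -- bilipschitz data on the right fundamental interval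
  have hsubP : Icc (r1/2) 1 ⊆ Icc (-1:ℝ) 1 \ {0} := by
    intro x hx
    constructor
    · exact ⟨by linarith [hx.1], hx.2⟩
    · simp only [mem_singleton_iff]
      intro h; rw [h] at hx; linarith [hx.1]
  have hsubM : Icc (-1:ℝ) (l1/2) ⊆ Icc (-1:ℝ) 1 \ {0} := by
    intro x hx
    constructor
    · exact ⟨hx.1, by linarith [hx.2]⟩
    · simp only [mem_singleton_iff]
      intro h; rw [h] at hx; linarith [hx.2]
  obtain ⟨mp, Mp, δp, hmp, hMp, hδp, hbp⟩ := bilip ξ (r1/2) 1 (by linarith)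
    (fun t ht => hd t (hsubP ht).1 (by simpa using (hsubP ht).2))
    (hdc.mono hsubP)
  obtain ⟨mm, Mm, δm, hmm, hMm, hδm, hbm⟩ := bilip ξ (-1) (l1/2) (by linarith)
    (fun t ht => hd t (hsubM ht).1 (by simpa using (hsubM ht).2))
    (hdc.mono hsubM)
  set δ : ℝ := min (min δp δm) (min (r1/2) (min (-l1/2) 1)) with hδdef
  have hδpos : 0 < δ := by
    apply lt_min (lt_min hδp hδm)
    apply lt_min (by linarith)
    exact lt_min (by linarith) one_pos
  have hδ1 : δ ≤ 1 := le_trans (min_le_right _ _) (le_trans (min_le_right _ _) (min_le_right _ _))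
  have hδp' : δ ≤ δp := le_trans (min_le_left _ _) (min_le_left _ _)
  have hδm' : δ ≤ δm := le_trans (min_le_left _ _) (min_le_right _ _)
  have hδr : δ ≤ r1/2 := le_trans (min_le_right _ _) (min_le_left _ _)
  have hδl : δ ≤ -l1/2 := le_trans (min_le_right _ _) (le_trans (min_le_right _ _) (min_le_left _ _))
  obtain ⟨ε, hεpos, hε⟩ := farlb ξ hc hi δ hδpos hδ1
  -- diameter bound
  obtain ⟨t₀, ht₀, hB'⟩ := isCompact_Icc.exists_isMaxOn
    (nonempty_Icc.mpr (by norm_num : (-1:ℝ) ≤ 1))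
    (continuous_norm.comp_continuousOn hc)
  have hB := isMaxOn_iff.mp hB'
  set D : ℝ := 2 * ‖ξ t₀‖ + 1 with hDdef
  have hDpos : 0 < D := by positivity
  have hDle : ∀ x ∈ Icc (-1:ℝ) 1, ∀ y ∈ Icc (-1:ℝ) 1, ‖ξ x - ξ y‖ ≤ D := by
    intro x hx y hy
    have h1 := hB x hx
    have h2 := hB y hy
    simp only [Function.comp] at h1 h2
    calc ‖ξ x - ξ y‖ ≤ ‖ξ x‖ + ‖ξ y‖ := by
          exact norm_sub_le _ _
    _ ≤ D := by rw [hDdef]; linarith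
  set m : ℝ := min mp mm with hmdef
  set M : ℝ := max Mp Mm with hMdef
  have hmpos : 0 < m := lt_min hmp hmm
  have hMpos : 0 < M := lt_of_lt_of_le hMp (le_max_left _ _)
  set C : ℝ := min (m / M) (ε / D) with hCdef
  have hCpos : 0 < C := lt_min (by positivity) (by positivity)
  have hCM : C * M ≤ m := by
    have h1 : C ≤ m / M := min_le_left _ _
    calc C * M ≤ (m / M) * M := mul_le_mul_of_nonneg_right h1 hMpos.le
    _ = m := by field_simp
  have hCD : C * D ≤ ε := by
    have h1 : C ≤ ε / D := min_le_right _ _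
    calc C * D ≤ (ε / D) * D := mul_le_mul_of_nonneg_right h1 hDpos.le
    _ = ε := by field_simp
  -- the claim for normalized triples
  have claimN : ∀ s t u : ℝ, s ∈ Icc (-1:ℝ) 1 → t ∈ Icc (-1:ℝ) 1 → u ∈ Icc (-1:ℝ) 1 →
      s ≤ t → t ≤ u → (r1 < u ∨ s < l1) →
      C * ‖ξ s - ξ t‖ ≤ ‖ξ s - ξ u‖ ∧
      C * ‖ξ t - ξ u‖ ≤ ‖ξ s - ξ u‖ := by
    intro s t u hs ht hu hst htu hesc
    rcases le_or_gt (u - s) δ with hsmall | hlarge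
    · -- small diameter: triple is inside one of the two smooth windows
      have hkey : m * (u - s) ≤ ‖ξ s - ξ u‖ ∧
          ‖ξ s - ξ t‖ ≤ M * (t - s) ∧
          ‖ξ t - ξ u‖ ≤ M * (u - t) := by
        rcases hesc with hru | hsl
        · -- right window
          have hsmem : s ∈ Icc (r1/2) 1 := ⟨by linarith, hs.2⟩
          have htmem : t ∈ Icc (r1/2) 1 := ⟨by linarith, ht.2⟩
          have humem : u ∈ Icc (r1/2) 1 := ⟨by linarith, hu.2⟩
          refine ⟨?_, ?_, ?_⟩
          · have := (hbp s hsmem u humem).2 (by rw [abs_of_nonneg (by linarith)]; linarith)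
            rw [abs_of_nonneg (by linarith : (0:ℝ) ≤ u - s)] at this
            calc m * (u - s) ≤ mp * (u - s) :=
                  mul_le_mul_of_nonneg_right (min_le_left _ _) (by linarith)
            _ ≤ ‖ξ u - ξ s‖ := this
            _ = ‖ξ s - ξ u‖ := habs_comm _ _
          · have := (hbp s hsmem t htmem).1
            rw [abs_of_nonneg (by linarith : (0:ℝ) ≤ t - s)] at this
            calc ‖ξ s - ξ t‖ = ‖ξ t - ξ s‖ := habs_comm _ _
            _ ≤ Mp * (t - s) := this
            _ ≤ M * (t - s) := mul_le_mul_of_nonneg_right (le_max_left _ _) (by linarith)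
          · have := (hbp t htmem u humem).1
            rw [abs_of_nonneg (by linarith : (0:ℝ) ≤ u - t)] at this
            calc ‖ξ t - ξ u‖ = ‖ξ u - ξ t‖ := habs_comm _ _
            _ ≤ Mp * (u - t) := this
            _ ≤ M * (u - t) := mul_le_mul_of_nonneg_right (le_max_left _ _) (by linarith)
        · -- left window
          have hsmem : s ∈ Icc (-1:ℝ) (l1/2) := ⟨hs.1, by linarith⟩
          have htmem : t ∈ Icc (-1:ℝ) (l1/2) := ⟨ht.1, by linarith⟩
          have humem : u ∈ Icc (-1:ℝ) (l1/2) := ⟨hu.1, by linarith⟩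
          refine ⟨?_, ?_, ?_⟩
          · have := (hbm s hsmem u humem).2 (by rw [abs_of_nonneg (by linarith)]; linarith)
            rw [abs_of_nonneg (by linarith : (0:ℝ) ≤ u - s)] at this
            calc m * (u - s) ≤ mm * (u - s) :=
                  mul_le_mul_of_nonneg_right (min_le_right _ _) (by linarith)
            _ ≤ ‖ξ u - ξ s‖ := this
            _ = ‖ξ s - ξ u‖ := habs_comm _ _
          · have := (hbm s hsmem t htmem).1
            rw [abs_of_nonneg (by linarith : (0:ℝ) ≤ t - s)] at this
            calc ‖ξ s - ξ t‖ = ‖ξ t - ξ s‖ := habs_comm _ _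
            _ ≤ Mm * (t - s) := this
            _ ≤ M * (t - s) := mul_le_mul_of_nonneg_right (le_max_right _ _) (by linarith)
          · have := (hbm t htmem u humem).1
            rw [abs_of_nonneg (by linarith : (0:ℝ) ≤ u - t)] at this
            calc ‖ξ t - ξ u‖ = ‖ξ u - ξ t‖ := habs_comm _ _
            _ ≤ Mm * (u - t) := this
            _ ≤ M * (u - t) := mul_le_mul_of_nonneg_right (le_max_right _ _) (by linarith)
      obtain ⟨hlow, hup1, hup2⟩ := hkey
      constructor
      · calc C * ‖ξ s - ξ t‖ ≤ C * (M * (t - s)) :=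
              mul_le_mul_of_nonneg_left hup1 hCpos.le
        _ = (C * M) * (t - s) := by ring
        _ ≤ m * (t - s) := mul_le_mul_of_nonneg_right hCM (by linarith)
        _ ≤ m * (u - s) := mul_le_mul_of_nonneg_left (by linarith) hmpos.le
        _ ≤ ‖ξ s - ξ u‖ := hlow
      · calc C * ‖ξ t - ξ u‖ ≤ C * (M * (u - t)) :=
              mul_le_mul_of_nonneg_left hup2 hCpos.le
        _ = (C * M) * (u - t) := by ring
        _ ≤ m * (u - t) := mul_le_mul_of_nonneg_right hCM (by linarith)
        _ ≤ m * (u - s) := mul_le_mul_of_nonneg_left (by linarith) hmpos.le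
        _ ≤ ‖ξ s - ξ u‖ := hlow
    · -- large diameter
      have hfar : ε ≤ ‖ξ s - ξ u‖ := by
        have := hε s hs u hu (by rw [abs_of_nonneg (by linarith)]; linarith)
        rw [habs_comm (ξ u) (ξ s)] at this
        exact this
      constructor
      · calc C * ‖ξ s - ξ t‖ ≤ C * D :=
              mul_le_mul_of_nonneg_left (hDle s hs t ht) hCpos.le
        _ ≤ ε := hCD
        _ ≤ ‖ξ s - ξ u‖ := hfar
      · calc C * ‖ξ t - ξ u‖ ≤ C * D :=
              mul_le_mul_of_nonneg_left (hDle t ht u hu) hCpos.le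
        _ ≤ ε := hCD
        _ ≤ ‖ξ s - ξ u‖ := hfar
  refine ⟨C, hCpos, ?_⟩
  intro s t u hs ht hu hst htu
  rcases eq_or_lt_of_le (hst.trans htu) with heq | hlt
  · have hts : t = s := le_antisymm (by rw [heq]; exact htu) hst
    constructor <;> (rw [hts, ← heq]; simp)
  · obtain ⟨k, s', t', u', hs'I, ht'I, hu'I, hst', htu', hesc, he1, he2, he3⟩ :=
      hnorm s t u hs hu hst htu hlt
    have hcl := claimN s' t' u' hs'I ht'I hu'I hst' htu' hesc
    have hP : (0:ℝ) < ‖lam‖ ^ k := pow_pos (by linarith) k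
    have heq1 : ‖ξ s' - ξ t'‖ = ‖lam‖ ^ k * ‖ξ s - ξ t‖ := by
      rw [he1, he2, ← mul_sub, norm_mul, norm_pow]
    have heq2 : ‖ξ s' - ξ u'‖ = ‖lam‖ ^ k * ‖ξ s - ξ u‖ := by
      rw [he1, he3, ← mul_sub, norm_mul, norm_pow]
    have heq3 : ‖ξ t' - ξ u'‖ = ‖lam‖ ^ k * ‖ξ t - ξ u‖ := by
      rw [he2, he3, ← mul_sub, norm_mul, norm_pow]
    constructor
    · have h1 := hcl.1
      rw [heq1, heq2] at h1
      have h2 : ‖lam‖ ^ k * (C * ‖ξ s - ξ t‖) ≤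
          ‖lam‖ ^ k * ‖ξ s - ξ u‖ := by
        calc ‖lam‖ ^ k * (C * ‖ξ s - ξ t‖)
            = C * (‖lam‖ ^ k * ‖ξ s - ξ t‖) := by ring
        _ ≤ _ := h1
      exact le_of_mul_le_mul_left h2 hP
    · have h1 := hcl.2
      rw [heq3, heq2] at h1
      have h2 : ‖lam‖ ^ k * (C * ‖ξ t - ξ u‖) ≤
          ‖lam‖ ^ k * ‖ξ s - ξ u‖ := by
        calc ‖lam‖ ^ k * (C * ‖ξ t - ξ u‖)
            = C * (‖lam‖ ^ k * ‖ξ t - ξ u‖) := by ring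
        _ ≤ _ := h1
      exact le_of_mul_le_mul_left h2 hP


/-- simple arcs `R'`, `L'` with common endpoint `0`, otherwise disjoint,
with `λ R' ⊇ R'` and `λ L' ⊇ L'` for some `|λ| > 1`, whose union is smooth except
possibly at `0`, form a quasi-arc `R' ∪ L'`. -/
theorem quasiArc_of_invariant_smooth_arcs
    (R' L' : Set ℂ)
    (hR : IsArcEndpoint 0 R') (hL : IsArcEndpoint 0 L')
    (hRL : R' ∩ L' = {0})
    (lam : ℂ) (hlam : 1 < ‖lam‖)
    (hinvR : R' ⊆ (fun z => lam * z) '' R')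
    (hinvL : L' ⊆ (fun z => lam * z) '' L')
    (hsmooth : ∃ ξ : ℝ → ℂ,
      ContinuousOn ξ (Icc (-1) 1) ∧ InjOn ξ (Icc (-1) 1) ∧
      ξ '' Icc (-1) 1 = R' ∪ L' ∧ ξ 0 = 0 ∧
      ξ '' Icc 0 1 = R' ∧ ξ '' Icc (-1) 0 = L' ∧
      (∀ t ∈ Icc (-1:ℝ) 1, t ≠ 0 → HasDerivAt ξ (deriv ξ t) t ∧ deriv ξ t ≠ 0) ∧
      ContinuousOn (deriv ξ) (Icc (-1) 1 \ {0})) :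
    IsQuasiArc (R' ∪ L') := by
  obtain ⟨ξ, hc, hi, hA, hξ0, hξR, hξL, hd, hdc⟩ := hsmooth
  have habs_comm : ∀ z w : ℂ, ‖z - w‖ = ‖w - z‖ := by
    intro z w
    rw [norm_sub_rev]
  have haff : (fun x : ℝ => 2*x - 1) '' Icc 0 1 = Icc (-1:ℝ) 1 := by
    ext y
    simp only [mem_image, mem_Icc]
    constructor
    · rintro ⟨x, ⟨h0, h1⟩, rfl⟩
      constructor <;> linarith
    · rintro ⟨h0, h1⟩
      exact ⟨(y+1)/2, ⟨by linarith, by linarith⟩, by ring⟩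
  have haffmem : ∀ x ∈ Icc (0:ℝ) 1, 2*x - 1 ∈ Icc (-1:ℝ) 1 := by
    intro x hx
    rw [← haff]
    exact mem_image_of_mem _ hx
  constructor
  · -- simple arc
    refine ⟨fun x => ξ (2*x - 1), ?_, ?_, ?_⟩
    · exact hc.comp (((continuous_const.mul continuous_id).sub continuous_const).continuousOn)
        haffmem
    · intro a ha b hb h
      have := hi (haffmem a ha) (haffmem b hb) h
      linarith
    · rw [show (fun x : ℝ => ξ (2*x - 1)) = ξ ∘ (fun x : ℝ => 2*x - 1) from rfl,
        image_comp, haff, hA]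
  · obtain ⟨C, hCpos, hG⟩ := keyG ξ R' L' lam hlam hinvR hinvL hc hi hξ0 hξR hξL hd hdc
    obtain ⟨v, hvc, hv⟩ := exists_inv ξ hc hi
    refine ⟨C, hCpos, ?_⟩
    intro η hηc hηi hηim
    have hmemA : ∀ x ∈ Icc (0:ℝ) 1, η x ∈ ξ '' Icc (-1:ℝ) 1 := by
      intro x hx
      rw [hA, ← hηim]
      exact mem_image_of_mem η hx
    have hφ : ∀ x ∈ Icc (0:ℝ) 1, v (η x) ∈ Icc (-1:ℝ) 1 ∧ ξ (v (η x)) = η x := by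
      intro x hx
      obtain ⟨w, hwI, hweq⟩ := hmemA x hx
      have hvw : v (η x) = w := by rw [← hweq, hv w hwI]
      exact ⟨hvw ▸ hwI, by rw [hvw, hweq]⟩
    have hφc : ContinuousOn (fun x => v (η x)) (Icc (0:ℝ) 1) :=
      hvc.comp hηc (fun x hx => hmemA x hx)
    have hφi : InjOn (fun x => v (η x)) (Icc (0:ℝ) 1) := by
      intro a ha b hb h
      have h1 := (hφ a ha).2
      have h2 := (hφ b hb).2
      apply hηi ha hb
      simp only at h
      rw [← h1, ← h2, h]
    intro x y z hx hy hz hxy hyz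
    rcases ContinuousOn.strictMonoOn_of_injOn_Icc' (by norm_num : (0:ℝ) ≤ 1) hφc hφi
      with hm | han
    · have h1 : v (η x) ≤ v (η y) := hm.monotoneOn hx hy hxy
      have h2 : v (η y) ≤ v (η z) := hm.monotoneOn hy hz hyz
      have hg := (hG (v (η x)) (v (η y)) (v (η z))
        (hφ x hx).1 (hφ y hy).1 (hφ z hz).1 h1 h2).1
      rwa [(hφ x hx).2, (hφ y hy).2, (hφ z hz).2] at hg
    · have h1 : v (η y) ≤ v (η x) := han.antitoneOn hx hy hxy
      have h2 : v (η z) ≤ v (η y) := han.antitoneOn hy hz hyz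
      have hg := (hG (v (η z)) (v (η y)) (v (η x))
        (hφ z hz).1 (hφ y hy).1 (hφ x hx).1 h2 h1).2
      rw [(hφ x hx).2, (hφ y hy).2, (hφ z hz).2] at hg
      rwa [habs_comm (η y) (η x), habs_comm (η z) (η x)] at hg
end

section
/- The map z ↦ z^d maps the prototype carrot 𝖢(ρ₀, θ₀) onto the prototype carrot 𝖢(ρ₀^d, d·θ₀), provided ρ₀ < 1 is sufficiently close to 1. -/
open Set

/-- The prototype carrot `𝖢(ρ₀, θ₀)`: the region in the closed unit disk given in
polar coordinates `(θ, ρ)` by `ρ₀ ≤ ρ ≤ e^{−|θ − θ₀|}`, where `|θ − θ₀|` is the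
distance in `ℝ/ℤ`. -/
noncomputable def protoCarrot (ρ₀ : ℝ) (θ₀ : AddCircle (1:ℝ)) : Set ℂ :=
  {z | ∃ ρ θ : ℝ, ρ₀ ≤ ρ ∧ ρ ≤ Real.exp (-(dist ((θ : AddCircle (1:ℝ))) θ₀)) ∧
    z = (ρ : ℂ) * Complex.exp (2 * Real.pi * Complex.I * θ)}

lemma pow_polar (ρ θ : ℝ) (d : ℕ) :
    ((ρ:ℂ) * Complex.exp (2 * Real.pi * Complex.I * θ)) ^ d
      = ((ρ ^ d : ℝ) : ℂ) * Complex.exp (2 * Real.pi * Complex.I * ((d * θ : ℝ) : ℂ)) := by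
  rw [mul_pow, ← Complex.exp_nat_mul]
  push_cast
  ring_nf

lemma exp_sub_int (φ : ℝ) (m : ℤ) :
    Complex.exp (2 * Real.pi * Complex.I * ((φ - m : ℝ) : ℂ))
      = Complex.exp (2 * Real.pi * Complex.I * φ) := by
  push_cast
  rw [mul_sub, Complex.exp_sub,
    show (2 * (Real.pi:ℂ) * Complex.I * m) = m * (2 * Real.pi * Complex.I) by ring,
    Complex.exp_int_mul_two_pi_mul_I, div_one]

/-- the map `z ↦ z^d` takes `𝖢(ρ₀, θ₀)` onto `𝖢(ρ₀^d, d θ₀)` provided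
`ρ₀ < 1` is sufficiently close to `1`. -/
theorem pow_image_protoCarrot
    (d : ℕ) (hd : 2 ≤ d) (θ₀ : AddCircle (1:ℝ)) :
    ∃ ρ₁ ∈ Ioo (0:ℝ) 1, ∀ ρ₀ : ℝ, ρ₁ ≤ ρ₀ → ρ₀ < 1 →
      (fun z : ℂ => z ^ d) '' protoCarrot ρ₀ θ₀ = protoCarrot (ρ₀ ^ d) (d • θ₀) := by
  refine ⟨1/2, ⟨by norm_num, by norm_num⟩, fun ρ₀ hρ₁ _ => ?_⟩
  have hρ₀pos : (0:ℝ) < ρ₀ := lt_of_lt_of_le (by norm_num) hρ₁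
  have hd0 : d ≠ 0 := by omega
  have hdR : (0:ℝ) < d := by positivity
  obtain ⟨t₀, rfl⟩ : ∃ t₀ : ℝ, (t₀ : AddCircle (1:ℝ)) = θ₀ := Quotient.exists_rep θ₀
  ext w
  simp only [mem_image, protoCarrot, mem_setOf_eq]
  constructor
  · rintro ⟨z, ⟨ρ, θ, hρ₀ρ, hρe, rfl⟩, rfl⟩
    have hρ0 : 0 ≤ ρ := le_trans hρ₀pos.le hρ₀ρ
    refine ⟨ρ ^ d, d * θ, pow_le_pow_left₀ hρ₀pos.le hρ₀ρ d, ?_, pow_polar ρ θ d⟩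
    have h1 : dist (((d * θ : ℝ) : AddCircle (1:ℝ))) (d • (t₀ : AddCircle (1:ℝ)))
        ≤ d * dist ((θ : AddCircle (1:ℝ))) ((t₀ : AddCircle (1:ℝ))) := by
      rw [dist_eq_norm, dist_eq_norm]
      have h2 : ((d * θ : ℝ) : AddCircle (1:ℝ)) - d • (t₀ : AddCircle (1:ℝ))
          = d • (((θ : AddCircle (1:ℝ))) - (t₀ : AddCircle (1:ℝ))) := by
        rw [smul_sub, show (d : ℝ) * θ = d • θ from (nsmul_eq_mul d θ).symm,
          AddCircle.coe_nsmul]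
      rw [h2]
      exact norm_nsmul_le
    calc ρ ^ d
        ≤ (Real.exp (-(dist ((θ : AddCircle (1:ℝ))) ((t₀:ℝ) : AddCircle (1:ℝ))))) ^ d :=
          pow_le_pow_left₀ hρ0 hρe d
      _ = Real.exp (-(d * dist ((θ : AddCircle (1:ℝ))) ((t₀:ℝ) : AddCircle (1:ℝ)))) := by
          rw [← Real.exp_nat_mul]; ring_nf
      _ ≤ _ := Real.exp_le_exp.2 (by linarith)
  · rintro ⟨σ, φ, hσ₀, hσe, rfl⟩
    have hσpos : 0 < σ := lt_of_lt_of_le (pow_pos hρ₀pos d) hσ₀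
    set r : ℝ := φ - d * t₀ with hr
    set u : ℝ := r - round r with hu
    have hdist : dist ((φ : AddCircle (1:ℝ))) (d • (t₀ : AddCircle (1:ℝ))) = |u| := by
      rw [dist_eq_norm]
      have h2 : ((φ : AddCircle (1:ℝ))) - d • (t₀ : AddCircle (1:ℝ))
          = ((r : ℝ) : AddCircle (1:ℝ)) := by
        rw [hr, AddCircle.coe_sub, show (d : ℝ) * t₀ = d • t₀ from (nsmul_eq_mul d t₀).symm,
          AddCircle.coe_nsmul]
      rw [h2, AddCircle.norm_eq]
      simp [hu]
    set θ : ℝ := t₀ + u / d with hθ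
    have hθdist : dist ((θ : AddCircle (1:ℝ))) ((t₀:ℝ) : AddCircle (1:ℝ)) ≤ |u| / d := by
      rw [dist_eq_norm, ← AddCircle.coe_sub, show θ - t₀ = u / d by rw [hθ]; ring]
      calc ‖((u / d : ℝ) : AddCircle (1:ℝ))‖ ≤ ‖u / d‖ := QuotientAddGroup.norm_mk_le_norm
        _ = |u| / d := by rw [Real.norm_eq_abs, abs_div, Nat.abs_cast]
    set ρ : ℝ := σ ^ ((d:ℝ)⁻¹) with hρ
    have hρpow : ρ ^ d = σ := Real.rpow_inv_natCast_pow hσpos.le hd0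
    have hρnn : 0 ≤ ρ := Real.rpow_nonneg hσpos.le _
    have hρ₀ρ : ρ₀ ≤ ρ := by
      rw [← pow_le_pow_iff_left₀ hρ₀pos.le hρnn hd0, hρpow]; exact hσ₀
    have hρe : ρ ≤ Real.exp (-(dist ((θ : AddCircle (1:ℝ))) ((t₀:ℝ) : AddCircle (1:ℝ)))) := by
      rw [← pow_le_pow_iff_left₀ hρnn (Real.exp_pos _).le hd0, hρpow]
      calc σ ≤ Real.exp (-|u|) := by rw [← hdist]; exact hσe
        _ ≤ Real.exp (-(d * dist ((θ : AddCircle (1:ℝ))) ((t₀:ℝ) : AddCircle (1:ℝ)))) := by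
            apply Real.exp_le_exp.2
            have := (mul_le_mul_of_nonneg_left hθdist hdR.le)
            rw [mul_div_cancel₀ _ hdR.ne'] at this
            linarith
        _ = (Real.exp (-(dist ((θ : AddCircle (1:ℝ))) ((t₀:ℝ) : AddCircle (1:ℝ))))) ^ d := by
            rw [← Real.exp_nat_mul]; ring_nf
    refine ⟨(ρ:ℂ) * Complex.exp (2 * Real.pi * Complex.I * (θ:ℂ)), ⟨ρ, θ, hρ₀ρ, hρe, rfl⟩, ?_⟩
    show ((ρ:ℂ) * Complex.exp (2 * Real.pi * Complex.I * (θ:ℂ))) ^ d = _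
    rw [pow_polar, hρpow, show (d : ℝ) * θ = φ - (round r : ℝ) by
      rw [hθ, hu, hr]; field_simp; ring, exp_sub_int]
end

section
/- Let k > 1 be an integer and suppose sequences of nonzero complex numbers uₙ, vₙ, wₙ satisfy: v̄ₙ := vₙ/uₙ → v̄ and w̄ₙ := wₙ/uₙ → w̄ in ℂ ∪ {∞}, |1 − v̄ₙ| ≤ |1 − w̄ₙ| for all n, δₙ := (1 − v̄ₙ)/(1 − w̄ₙ) → δ with |δ| ≤ 1, and Δₙ := (1 − v̄ₙ^k)/(1 − w̄ₙ^k) → ∞. Then v̄ and w̄ are finite, w̄ ≠ 1, and w̄ is a k-th root of unity different from 1. -/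
open Filter Topology

/-- let `k > 1` and `uₙ, vₙ, wₙ` be nonzero complex sequences with
`v̄ₙ = vₙ/uₙ` and `w̄ₙ = wₙ/uₙ` converging in `ℂ ∪ {∞}`, `|1 − v̄ₙ| ≤ |1 − w̄ₙ|`,
`δₙ = (1 − v̄ₙ)/(1 − w̄ₙ) → δ` with `|δ| ≤ 1`, and `Δₙ = (1 − v̄ₙ^k)/(1 − w̄ₙ^k) → ∞`.
Then `v̄` and `w̄` are finite and `w̄` is a `k`-th root of unity different from `1`. -/
theorem limit_is_root_of_unity
    (k : ℕ) (hk : 1 < k) (u v w : ℕ → ℂ)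
    (hu : ∀ n, u n ≠ 0) (hv : ∀ n, v n ≠ 0) (hw : ∀ n, w n ≠ 0)
    (vb wb : ℕ → ℂ)
    (hvb : vb = fun n => v n / u n) (hwb : wb = fun n => w n / u n)
    (hwb1 : ∀ n, wb n ≠ 1) (hwbk : ∀ n, wb n ^ k ≠ 1)
    (hle : ∀ n, ‖1 - vb n‖ ≤ ‖1 - wb n‖)
    (hvlim : (∃ V : ℂ, Tendsto vb atTop (𝓝 V)) ∨
      Tendsto (fun n => ‖vb n‖) atTop atTop)
    (hwlim : (∃ W : ℂ, Tendsto wb atTop (𝓝 W)) ∨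
      Tendsto (fun n => ‖wb n‖) atTop atTop)
    (δ : ℂ) (hδ : Tendsto (fun n => (1 - vb n) / (1 - wb n)) atTop (𝓝 δ))
    (hδ1 : ‖δ‖ ≤ 1)
    (hΔ : Tendsto (fun n => ‖(1 - vb n ^ k) / (1 - wb n ^ k)‖) atTop atTop) :
    ∃ V W : ℂ, Tendsto vb atTop (𝓝 V) ∧ Tendsto wb atTop (𝓝 W) ∧
      W ≠ 1 ∧ W ^ k = 1 := by
  -- basic bounds valid for all n
  have hvbound : ∀ n, ‖vb n‖ ≤ ‖wb n‖ + 2 := by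
    intro n
    have h1 : ‖vb n‖ ≤ ‖1 - vb n‖ + 1 := by
      have := norm_sub_norm_le (vb n) 1
      simp only [norm_one] at this
      have h2 : ‖vb n - 1‖ = ‖1 - vb n‖ := by
        rw [norm_sub_rev]
      linarith
    have h3 : ‖1 - wb n‖ ≤ 1 + ‖wb n‖ := by
      have := norm_sub_le (1 : ℂ) (wb n)
      simpa using this
    have := hle n
    linarith
  -- Step 1: wb converges
  have hWex : ∃ W : ℂ, Tendsto wb atTop (𝓝 W) := by
    rcases hwlim with h | h
    · exact h
    · exfalso
      -- eventually |wb n| ≥ 2, and then the ratio is bounded by C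
      set C : ℝ := 2 * (1 + 2 ^ k) with hC
      have hbound : ∀ᶠ n in atTop, ‖(1 - vb n ^ k) / (1 - wb n ^ k)‖ ≤ C := by
        filter_upwards [h.eventually_ge_atTop 2] with n hn
        set a : ℝ := ‖wb n‖ with ha
        have ha0 : (0:ℝ) < a := by linarith
        have hak2 : (2:ℝ) ≤ a ^ k := by
          calc (2:ℝ) ≤ 2 ^ k := by
                have : (2:ℝ) ^ 1 ≤ 2 ^ k := pow_le_pow_right₀ one_le_two hk.le
                simpa using this
            _ ≤ a ^ k := pow_le_pow_left₀ (by norm_num) hn k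
        have hak1 : (1:ℝ) ≤ a ^ k := by linarith
        -- numerator bound
        have hnum : ‖1 - vb n ^ k‖ ≤ (1 + 2 ^ k) * a ^ k := by
          have h1 : ‖1 - vb n ^ k‖ ≤ 1 + ‖vb n‖ ^ k := by
            have := norm_sub_le (1 : ℂ) (vb n ^ k)
            simpa [norm_pow] using this
          have h2 : ‖vb n‖ ^ k ≤ (a + 2) ^ k :=
            pow_le_pow_left₀ (norm_nonneg _) (hvbound n) k
          have h3 : (a + 2) ^ k ≤ (2 * a) ^ k :=
            pow_le_pow_left₀ (by linarith) (by linarith) k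
          have h4 : (2 * a) ^ k = 2 ^ k * a ^ k := mul_pow 2 a k
          nlinarith
        -- denominator bound
        have hden : a ^ k / 2 ≤ ‖1 - wb n ^ k‖ := by
          have h1 : ‖wb n ^ k‖ - 1 ≤ ‖1 - wb n ^ k‖ := by
            have := norm_sub_norm_le (wb n ^ k) (1 : ℂ)
            have h2 : ‖wb n ^ k - 1‖ = ‖(1:ℂ) - wb n ^ k‖ := norm_sub_rev _ _
            rw [h2] at this
            simpa using this
          have h3 : ‖wb n ^ k‖ = a ^ k := by rw [norm_pow]
          rw [h3] at h1
          linarith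
        have hden0 : (0:ℝ) < a ^ k / 2 := by linarith
        calc ‖(1 - vb n ^ k) / (1 - wb n ^ k)‖
            = ‖1 - vb n ^ k‖ / ‖1 - wb n ^ k‖ := norm_div _ _
          _ ≤ ((1 + 2 ^ k) * a ^ k) / (a ^ k / 2) := by
              apply div_le_div₀ (by positivity) hnum hden0 hden
          _ = C := by
              rw [hC]; field_simp
      obtain ⟨n, hn1, hn2⟩ := ((hΔ.eventually_gt_atTop C).and hbound).exists
      linarith
  obtain ⟨W, hW⟩ := hWex
  -- Step 2: vb converges
  have hVex : ∃ V : ℂ, Tendsto vb atTop (𝓝 V) := by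
    rcases hvlim with h | h
    · exact h
    · exfalso
      have hWb : ∀ᶠ n in atTop, ‖wb n‖ ≤ ‖W‖ + 1 := by
        have : Tendsto (fun n => ‖wb n‖) atTop (𝓝 (‖W‖)) := by
          simpa using hW.norm
        exact this.eventually_le_const (by linarith)
      obtain ⟨n, hn1, hn2⟩ := ((h.eventually_gt_atTop (‖W‖ + 3)).and hWb).exists
      have := hvbound n
      linarith
  obtain ⟨V, hV⟩ := hVex
  -- Step 3: W ^ k = 1
  have hWk : W ^ k = 1 := by
    have hnum : Tendsto (fun n => ‖1 - vb n ^ k‖) atTop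
        (𝓝 (‖1 - V ^ k‖)) := by
      have : Tendsto (fun n => (1:ℂ) - vb n ^ k) atTop (𝓝 (1 - V ^ k)) :=
        tendsto_const_nhds.sub (hV.pow k)
      simpa using this.norm
    set M : ℝ := ‖1 - V ^ k‖ + 1 with hM
    have hnumM : ∀ᶠ n in atTop, ‖1 - vb n ^ k‖ ≤ M :=
      hnum.eventually_le_const (by simp [hM])
    have hd0 : Tendsto (fun n => M / ‖(1 - vb n ^ k) / (1 - wb n ^ k)‖)
        atTop (𝓝 0) := Tendsto.div_atTop tendsto_const_nhds hΔ
    have hsq : Tendsto (fun n => ‖1 - wb n ^ k‖) atTop (𝓝 0) := by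
      apply squeeze_zero' (Eventually.of_forall fun n => norm_nonneg _) _ hd0
      filter_upwards [hnumM, hΔ.eventually_ge_atTop 1] with n h1 h2
      set D := ‖(1 - vb n ^ k) / (1 - wb n ^ k)‖ with hD
      have hD0 : 0 < D := by linarith
      have hden : ‖1 - wb n ^ k‖ * D = ‖1 - vb n ^ k‖ := by
        rw [hD, norm_div]
        have hne : ‖1 - wb n ^ k‖ ≠ 0 := by
          simp only [ne_eq, norm_eq_zero, sub_eq_zero]
          exact fun hh => hwbk n hh.symm
        field_simp
      rw [le_div_iff₀ hD0, hden]
      linarith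
    have h1 : Tendsto (fun n => (1:ℂ) - wb n ^ k) atTop (𝓝 (1 - W ^ k)) :=
      tendsto_const_nhds.sub (hW.pow k)
    have h2 : Tendsto (fun n => (1:ℂ) - wb n ^ k) atTop (𝓝 0) := by
      rw [tendsto_zero_iff_norm_tendsto_zero]
      simpa using hsq
    have h3 : (1:ℂ) - W ^ k = 0 := tendsto_nhds_unique h1 h2
    exact (sub_eq_zero.mp h3).symm
  -- Step 4: W ≠ 1
  have hW1 : W ≠ 1 := by
    intro hW1
    subst hW1
    -- then vb → 1 as well
    have hV1 : Tendsto vb atTop (𝓝 1) := by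
      have h0 : Tendsto (fun n => ‖1 - wb n‖) atTop (𝓝 0) := by
        have : Tendsto (fun n => (1:ℂ) - wb n) atTop (𝓝 (1 - 1)) :=
          tendsto_const_nhds.sub hW
        rw [sub_self] at this
        simpa using this.norm
      have h1 : Tendsto (fun n => (1:ℂ) - vb n) atTop (𝓝 0) := by
        rw [tendsto_zero_iff_norm_tendsto_zero]
        apply squeeze_zero (fun n => norm_nonneg _) _ h0
        intro n
        simpa using hle n
      have h2 : Tendsto (fun n => (1:ℂ) - (1 - vb n)) atTop (𝓝 (1 - 0)) :=
        tendsto_const_nhds.sub h1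
      simpa using h2
    have hVeq : V = 1 := tendsto_nhds_unique hV hV1
    subst hVeq
    -- geometric sums
    set Sv : ℕ → ℂ := fun n => ∑ i ∈ Finset.range k, vb n ^ i with hSv
    set Sw : ℕ → ℂ := fun n => ∑ i ∈ Finset.range k, wb n ^ i with hSw
    have hSvlim : Tendsto Sv atTop (𝓝 (k : ℂ)) := by
      have : Tendsto Sv atTop (𝓝 (∑ i ∈ Finset.range k, (1:ℂ) ^ i)) :=
        tendsto_finset_sum _ (fun i _ => hV1.pow i)
      simpa using this
    have hSwlim : Tendsto Sw atTop (𝓝 (k : ℂ)) := by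
      have : Tendsto Sw atTop (𝓝 (∑ i ∈ Finset.range k, (1:ℂ) ^ i)) :=
        tendsto_finset_sum _ (fun i _ => hW.pow i)
      simpa using this
    have hk0 : (k : ℂ) ≠ 0 := by
      simp only [ne_eq, Nat.cast_eq_zero]
      omega
    -- the identity
    have hid : ∀ n, (1 - vb n ^ k) / (1 - wb n ^ k)
        = ((1 - vb n) / (1 - wb n)) * (Sv n / Sw n) := by
      intro n
      have h1w : (1:ℂ) - wb n ≠ 0 := sub_ne_zero.mpr (Ne.symm (hwb1 n))
      have hgw : (1:ℂ) - wb n ^ k = (1 - wb n) * Sw n := by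
        have := geom_sum_mul (wb n) k
        rw [hSw]
        linear_combination this
      have hgv : (1:ℂ) - vb n ^ k = (1 - vb n) * Sv n := by
        have := geom_sum_mul (vb n) k
        rw [hSv]
        linear_combination this
      have hSwne : Sw n ≠ 0 := by
        intro h0
        apply hwbk n
        have : (1:ℂ) - wb n ^ k = 0 := by rw [hgw, h0, mul_zero]
        linear_combination -this
      rw [hgv, hgw]
      field_simp
    have hΔlim : Tendsto (fun n => (1 - vb n ^ k) / (1 - wb n ^ k)) atTop
        (𝓝 (δ * ((k : ℂ) / (k : ℂ)))) := by
      simp only [hid]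
      exact hδ.mul (hSvlim.div hSwlim hk0)
    have hΔabs : Tendsto (fun n => ‖(1 - vb n ^ k) / (1 - wb n ^ k)‖) atTop
        (𝓝 (‖δ * ((k : ℂ) / (k : ℂ))‖)) := by
      simpa using hΔlim.norm
    exact not_tendsto_atTop_of_tendsto_nhds hΔabs hΔ
  exact ⟨V, W, hV, hW, hW1, hWk⟩
end

section
/- A quasi-symmetric embedding maps quasi-arcs to quasi-arcs: if f : X → ℂ is η-quasi-symmetric and A ⊂ X is a simple arc whose image f(A) in ℂ can be parametrized, and A is a quasi-arc in ℂ (with X ⊂ ℂ), then f(A) is a quasi-arc. -/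
open Set

/-- `f` is quasi-symmetric on `S`: there is an increasing homeomorphism
`η : [0,∞) → [0,∞)` controlling ratios of distances for sufficiently close triples. -/
def QuasiSymmetricOn (f : ℂ → ℂ) (S : Set ℂ) : Prop :=
  ∃ η : ℝ → ℝ, StrictMonoOn η (Ici 0) ∧ ContinuousOn η (Ici 0) ∧ η 0 = 0 ∧
    SurjOn η (Ici 0) (Ici 0) ∧
    ∃ ε > 0, ∀ x ∈ S, ∀ y ∈ S, ∀ z ∈ S, x ≠ y → x ≠ z → y ≠ z →
      dist x y < ε → dist x z < ε → dist y z < ε →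
      dist (f x) (f y) ≤ η (dist x y / dist x z) * dist (f x) (f z)


/-- a quasi-symmetric embedding maps quasi-arcs to quasi-arcs. -/
theorem quasiArc_image_of_qs
    (X : Set ℂ) (f : ℂ → ℂ)
    (hqs : QuasiSymmetricOn f X) (hinj : InjOn f X) (hcont : ContinuousOn f X)
    (A : Set ℂ) (hA : A ⊆ X)
    (hqa : IsQuasiArc A)
    (harc : IsSimpleArc (f '' A)) :
    IsQuasiArc (f '' A) := by
  obtain ⟨hAarc, C, hC, hCall⟩ := hqa
  obtain ⟨ξ, hξc, hξi, hξim⟩ := hAarc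
  have hξq : IsQuasiArcParam C ξ := hCall ξ hξc hξi hξim
  obtain ⟨η, hηm, hηc, hη0, hηs, ε, hε, hqs⟩ := hqs
  have hIc : IsCompact (Icc (0:ℝ) 1) := isCompact_Icc
  set F : ℝ → ℂ := f ∘ ξ with hFdef
  have hξX : ∀ t ∈ Icc (0:ℝ) 1, ξ t ∈ X := fun t ht => hA (hξim ▸ mem_image_of_mem ξ ht)
  have hFc : ContinuousOn F (Icc 0 1) := hcont.comp hξc hξX
  have hFi : InjOn F (Icc 0 1) := fun a ha b hb h =>
    hξi ha hb (hinj (hξX a ha) (hξX b hb) h)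
  have hFim : F '' Icc 0 1 = f '' A := by rw [hFdef, image_comp, hξim]
  -- uniform continuity of ξ
  obtain ⟨δ₀, hδ₀, hδ⟩ := Metric.uniformContinuousOn_iff.mp
    (hIc.uniformContinuousOn_of_continuous hξc) ε hε
  set δ : ℝ := min δ₀ 1 with hδdef
  have hδpos : 0 < δ := lt_min hδ₀ one_pos
  have hδ1 : δ ≤ 1 := min_le_right _ _
  -- K1 = η (1/C)
  set K1 : ℝ := η (1 / C) with hK1def
  have hK1 : 0 < K1 := by
    have := hηm self_mem_Ici (mem_Ici.mpr (by positivity : (0:ℝ) ≤ 1 / C))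
      (by positivity)
    rw [hη0] at this; exact this
  -- compactness constants
  set g : ℝ × ℝ → ℝ := fun p => dist (F p.1) (F p.2) with hgdef
  have hgc : ContinuousOn g (Icc (0:ℝ) 1 ×ˢ Icc (0:ℝ) 1) :=
    by have h := continuous_dist.comp_continuousOn
          ((hFc.comp continuousOn_fst (fun p (hp : p ∈ Icc (0:ℝ) 1 ×ˢ Icc (0:ℝ) 1) => hp.1)).prodMk
            (hFc.comp continuousOn_snd (fun p (hp : p ∈ Icc (0:ℝ) 1 ×ˢ Icc (0:ℝ) 1) => hp.2))); exact h
  set S : Set (ℝ × ℝ) := (Icc (0:ℝ) 1 ×ˢ Icc (0:ℝ) 1) ∩ {p | p.1 + δ ≤ p.2} with hSdef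
  have hScomp : IsCompact S := (hIc.prod hIc).inter_right
    (isClosed_le (continuous_fst.add continuous_const) continuous_snd)
  have hSne : S.Nonempty := by
    refine ⟨(0, δ), ⟨⟨le_rfl, zero_le_one⟩, ⟨hδpos.le, hδ1⟩⟩, ?_⟩
    simp
  obtain ⟨p₀, hp₀S, hp₀min⟩ := hScomp.exists_isMinOn hSne (hgc.mono inter_subset_left)
  set m : ℝ := g p₀ with hmdef
  have hm : 0 < m := by
    have hne : p₀.1 ≠ p₀.2 := by
      have := hp₀S.2
      simp only [mem_setOf_eq] at this
      intro h; rw [h] at this; linarith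
    have : F p₀.1 ≠ F p₀.2 := fun h => hne (hFi hp₀S.1.1 hp₀S.1.2 h)
    exact dist_pos.mpr this
  obtain ⟨q₀, hq₀S, hq₀max⟩ := (hIc.prod hIc).exists_isMaxOn
    ⟨(0,0), ⟨⟨le_rfl, zero_le_one⟩, ⟨le_rfl, zero_le_one⟩⟩⟩ hgc
  set D : ℝ := g q₀ with hDdef
  have hD : 0 ≤ D := dist_nonneg
  set K : ℝ := min (1 / K1) (min (m / (D + 1)) 1) with hKdef
  have hK : 0 < K := lt_min (by positivity) (lt_min (by positivity) one_pos)
  have hKle1 : K ≤ 1 := le_trans (min_le_right _ _) (min_le_right _ _)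
  -- forward quasi-arc estimate for F
  have hfwd : ∀ x ∈ Icc (0:ℝ) 1, ∀ y ∈ Icc (0:ℝ) 1, ∀ z ∈ Icc (0:ℝ) 1, x ≤ y → y ≤ z →
      K * dist (F x) (F y) ≤ dist (F x) (F z) := by
    intro x hx y hy z hz hxy hyz
    rcases le_or_gt δ (z - x) with hfar | hclose
    · have h1 : dist (F x) (F y) ≤ D := isMaxOn_iff.mp hq₀max (x, y) (mem_prod.mpr ⟨hx, hy⟩)
      have h2 : m ≤ dist (F x) (F z) := isMinOn_iff.mp hp₀min (x, z) ⟨mem_prod.mpr ⟨hx, hz⟩, by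
        simp only [mem_setOf_eq]; linarith⟩
      have hKm : K ≤ m / (D + 1) := le_trans (min_le_right _ _) (min_le_left _ _)
      have : K * dist (F x) (F y) ≤ (m / (D + 1)) * D :=
        mul_le_mul hKm h1 dist_nonneg (by positivity)
      have hmD : (m / (D + 1)) * D ≤ m := by
        rw [div_mul_eq_mul_div, div_le_iff₀ (by positivity)]
        nlinarith
      linarith
    · rcases eq_or_lt_of_le hxy with rfl | hxy'
      · simp only [dist_self, mul_zero]; exact dist_nonneg
      rcases eq_or_lt_of_le hyz with rfl | hyz'
      · nlinarith [dist_nonneg (x := F x) (y := F y)]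
      -- x < y < z, all close
      have hxz : x < z := hxy'.trans hyz'
      have haX := hξX x hx
      have hbX := hξX y hy
      have hcX := hξX z hz
      have hab : ξ x ≠ ξ y := fun h => hxy'.ne (hξi hx hy h)
      have hac : ξ x ≠ ξ z := fun h => hxz.ne (hξi hx hz h)
      have hbc : ξ y ≠ ξ z := fun h => hyz'.ne (hξi hy hz h)
      have hxyd : dist x y < δ₀ := by
        rw [Real.dist_eq, abs_of_nonpos (by linarith)]
        have : δ ≤ δ₀ := min_le_left _ _
        linarith
      have hxzd : dist x z < δ₀ := by
        rw [Real.dist_eq, abs_of_nonpos (by linarith)]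
        have : δ ≤ δ₀ := min_le_left _ _
        linarith
      have hyzd : dist y z < δ₀ := by
        rw [Real.dist_eq, abs_of_nonpos (by linarith)]
        have : δ ≤ δ₀ := min_le_left _ _
        linarith
      have hd1 : dist (ξ x) (ξ y) < ε := hδ x hx y hy hxyd
      have hd2 : dist (ξ x) (ξ z) < ε := hδ x hx z hz hxzd
      have hd3 : dist (ξ y) (ξ z) < ε := hδ y hy z hz hyzd
      have hq := hqs (ξ x) haX (ξ y) hbX (ξ z) hcX hab hac hbc hd1 hd2 hd3
      have hdac : 0 < dist (ξ x) (ξ z) := dist_pos.mpr hac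
      have hquasi : C * dist (ξ x) (ξ y) ≤ dist (ξ x) (ξ z) := by
        have := hξq x y z hx hy hz hxy hyz
        rwa [Complex.dist_eq, Complex.dist_eq]
      have hratio : dist (ξ x) (ξ y) / dist (ξ x) (ξ z) ≤ 1 / C := by
        rw [div_le_div_iff₀ hdac hC]
        nlinarith
      have hrmem : dist (ξ x) (ξ y) / dist (ξ x) (ξ z) ∈ Ici (0:ℝ) :=
        mem_Ici.mpr (by positivity)
      have hηle : η (dist (ξ x) (ξ y) / dist (ξ x) (ξ z)) ≤ K1 :=
        hηm.monotoneOn hrmem (mem_Ici.mpr (by positivity)) hratio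
      have hFb : dist (F x) (F y) ≤ K1 * dist (F x) (F z) := by
        refine le_trans hq ?_
        exact mul_le_mul_of_nonneg_right hηle dist_nonneg
      have hKK1 : K ≤ 1 / K1 := min_le_left _ _
      calc K * dist (F x) (F y) ≤ (1 / K1) * (K1 * dist (F x) (F z)) :=
            mul_le_mul hKK1 hFb dist_nonneg (by positivity)
        _ = dist (F x) (F z) := by field_simp
  -- both directions with constant K/(K+1)
  have hboth : ∀ a ∈ Icc (0:ℝ) 1, ∀ b ∈ Icc (0:ℝ) 1, ∀ c ∈ Icc (0:ℝ) 1,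
      ((a ≤ b ∧ b ≤ c) ∨ (c ≤ b ∧ b ≤ a)) →
      (K / (K + 1)) * dist (F a) (F b) ≤ dist (F a) (F c) := by
    intro a ha b hb c hc hord
    have hKK : K / (K + 1) ≤ K := by
      rw [div_le_iff₀ (by positivity)]
      nlinarith
    rcases hord with ⟨h1, h2⟩ | ⟨h1, h2⟩
    · have := hfwd a ha b hb c hc h1 h2
      nlinarith [dist_nonneg (x := F a) (y := F b)]
    · have hf := hfwd c hc b hb a ha h1 h2
      have htri : dist (F a) (F b) ≤ dist (F a) (F c) + dist (F c) (F b) :=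
        dist_triangle _ _ _
      rw [div_mul_eq_mul_div, div_le_iff₀ (by positivity)]
      have hcomm : dist (F c) (F a) = dist (F a) (F c) := dist_comm _ _
      nlinarith [dist_nonneg (x := F c) (y := F b)]
  -- conclude
  refine ⟨harc, K / (K + 1), by positivity, ?_⟩
  intro ζ hζc hζi hζim x y z hx hy hz hxy hyz
  -- build the change of parameter ψ
  haveI : CompactSpace (Icc (0:ℝ) 1) := isCompact_iff_compactSpace.mp hIc
  have hF'c : Continuous ((Icc (0:ℝ) 1).restrict F) := continuousOn_iff_continuous_restrict.mp hFc
  have hF'i : Function.Injective ((Icc (0:ℝ) 1).restrict F) := fun a b h =>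
    Subtype.ext (hFi a.2 b.2 h)
  have hemb := hF'c.isClosedEmbedding hF'i
  have hζ'c : Continuous ((Icc (0:ℝ) 1).restrict ζ) := continuousOn_iff_continuous_restrict.mp hζc
  have hexists : ∀ t : Icc (0:ℝ) 1, ∃ s : Icc (0:ℝ) 1, F s = ζ t := by
    intro t
    have : ζ ↑t ∈ F '' Icc 0 1 := by
      rw [hFim, ← hζim]; exact mem_image_of_mem ζ t.2
    obtain ⟨s, hs, h⟩ := this
    exact ⟨⟨s, hs⟩, h⟩
  choose ψ hψ using hexists
  have hψc : Continuous ψ := by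
    rw [hemb.isEmbedding.continuous_iff]
    have : ((Icc (0:ℝ) 1).restrict F) ∘ ψ = (Icc (0:ℝ) 1).restrict ζ := by
      funext t; exact hψ t
    rw [this]; exact hζ'c
  have hψi : Function.Injective ψ := by
    intro a b h
    have h2 : ζ ↑a = ζ ↑b := by rw [← hψ a, ← hψ b, h]
    exact Subtype.ext (hζi a.2 b.2 h2)
  -- transfer to a real function φ
  set φ : ℝ → ℝ := fun t => if h : t ∈ Icc (0:ℝ) 1 then (ψ ⟨t, h⟩ : ℝ) else 0 with hφdef
  have hφval : ∀ t (ht : t ∈ Icc (0:ℝ) 1), φ t = (ψ ⟨t, ht⟩ : ℝ) := by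
    intro t ht; rw [hφdef]; exact dif_pos ht
  have hφmem : ∀ t ∈ Icc (0:ℝ) 1, φ t ∈ Icc (0:ℝ) 1 := by
    intro t ht; rw [hφval t ht]; exact (ψ ⟨t, ht⟩).2
  have hφF : ∀ t (ht : t ∈ Icc (0:ℝ) 1), F (φ t) = ζ t := by
    intro t ht; rw [hφval t ht]; exact hψ ⟨t, ht⟩
  have hφc : ContinuousOn φ (Icc 0 1) := by
    rw [continuousOn_iff_continuous_restrict]
    have : (Icc (0:ℝ) 1).domRestrict φ = fun t => (ψ t : ℝ) := by
      funext t
      simp only [domRestrict_apply]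
      rw [hφval ↑t t.2]
    rw [this]
    exact continuous_subtype_val.comp hψc
  have hφi : InjOn φ (Icc 0 1) := by
    intro a ha b hb h
    rw [hφval a ha, hφval b hb] at h
    have := hψi (Subtype.ext h)
    exact congrArg Subtype.val this
  have hmono := ContinuousOn.strictMonoOn_of_injOn_Icc' zero_le_one hφc hφi
  rw [← Complex.dist_eq, ← Complex.dist_eq, ← hφF x hx, ← hφF y hy, ← hφF z hz]
  apply hboth (φ x) (hφmem x hx) (φ y) (hφmem y hy) (φ z) (hφmem z hz)
  rcases hmono with hmo | han
  · exact Or.inl ⟨hmo.monotoneOn hx hy hxy, hmo.monotoneOn hy hz hyz⟩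
  · exact Or.inr ⟨han.antitoneOn hy hz hyz, han.antitoneOn hx hy hxy⟩
end

section
/- Let P be a polynomial with connected filled Julia set K_P, let Zc be an admissible collection of cuts, and suppose P restricted to the avoiding set A_P(Zc) is injective and A_P(Zc) is connected with no non-repelling periodic points other than possibly the fixed root points of cuts in Zc (which are non-rotational repelling fixed points). If A_P(Zc) contains a critical point c of P, then c belongs to the set of root points of cuts in Zc. -/
open Set Filter Topology

/-- A cut for the polynomial map `P` with filled Julia set `K`: two external rays
(simple curves in the complement of `K`) landing at a common root point of `K`,
together with the wedge it bounds (a connected component of the complement of the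
cut; the empty set for a degenerate cut). -/
structure PolyCut (P : ℂ → ℂ) (K : Set ℂ) where
  root : ℂ
  rayR : ℝ → ℂ
  rayL : ℝ → ℂ
  wedge : Set ℂ
  root_mem : root ∈ K
  rayR_cont : ContinuousOn rayR (Set.Ioo 0 1)
  rayL_cont : ContinuousOn rayL (Set.Ioo 0 1)
  rayR_out : ∀ t ∈ Set.Ioo (0:ℝ) 1, rayR t ∉ K
  rayL_out : ∀ t ∈ Set.Ioo (0:ℝ) 1, rayL t ∉ K
  rayR_land : Filter.Tendsto rayR (nhdsWithin 1 (Set.Iio 1)) (nhds root)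
  rayL_land : Filter.Tendsto rayL (nhdsWithin 1 (Set.Iio 1)) (nhds root)
  wedge_comp : ∀ x ∈ wedge,
    wedge = connectedComponentIn ((rayR '' Set.Ioo 0 1 ∪ rayL '' Set.Ioo 0 1 ∪ {root})ᶜ) x

/-- The carrier of a cut: the two rays together with the root point. -/
def PolyCut.carrier {P : ℂ → ℂ} {K : Set ℂ} (Γ : PolyCut P K) : Set ℂ :=
  Γ.rayR '' Set.Ioo 0 1 ∪ Γ.rayL '' Set.Ioo 0 1 ∪ {Γ.root}

/-- An admissible collection of cuts: finite, `P`-invariant, and all cuts lie in one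
(principal) connected component of the complement of the union of the wedges. -/
def IsAdmissible (P : ℂ → ℂ) (K : Set ℂ) (Zc : Set (PolyCut P K)) : Prop :=
  Zc.Finite ∧
  (∀ Γ ∈ Zc, ∃ Γ' ∈ Zc, P Γ.root = Γ'.root ∧ P '' Γ.carrier = Γ'.carrier) ∧
  ∃ O : Set ℂ, (∀ x ∈ O, O = connectedComponentIn ((⋃ Γ ∈ Zc, Γ.wedge)ᶜ) x) ∧
    ∀ Γ ∈ Zc, Γ.carrier ⊆ O

/-- The avoiding set `A_P(Zc)`: points of `K` whose forward orbit never enters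
any wedge of `Zc`. -/
def avoidingSet (P : ℂ → ℂ) (K : Set ℂ) (Zc : Set (PolyCut P K)) : Set ℂ :=
  {x ∈ K | ∀ n : ℕ, P^[n] x ∉ ⋃ Γ ∈ Zc, Γ.wedge}


open Polynomial in
private lemma sibling_exists (p : Polynomial ℂ) (c : ℂ) (hdeg : 1 < p.natDegree)
    (hcrit : p.derivative.eval c = 0) :
    ∀ ε > 0, ∃ δ > 0, ∀ a : ℂ, dist a c < δ → a ≠ c →
      ∃ b : ℂ, dist b c < ε ∧ b ≠ a ∧ p.eval b = p.eval a := by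
  have hq0 : (p - C (p.eval c)) ≠ 0 := by
    intro h
    have h2 : (p - C (p.eval c)).natDegree = p.natDegree := natDegree_sub_C
    rw [h, natDegree_zero] at h2
    omega
  set q : Polynomial ℂ := p - C (p.eval c) with hqdef
  have hqc : q.IsRoot c := by simp [hqdef, IsRoot]
  have hq' : q.derivative = p.derivative := by simp [hqdef]
  have hd0 : q.derivative ≠ 0 := by
    rw [hq']
    intro h
    have := natDegree_eq_zero_of_derivative_eq_zero h
    omega
  set m : ℕ := rootMultiplicity c q with hmdef
  have hm1 : 0 < m := (rootMultiplicity_pos hq0).2 hqc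
  have hd'root : q.derivative.IsRoot c := by rw [hq']; exact hcrit
  have hm2 : 2 ≤ m := by
    have h1 : 0 < rootMultiplicity c q.derivative := (rootMultiplicity_pos hd0).2 hd'root
    have h2 : rootMultiplicity c q.derivative = m - 1 := derivative_rootMultiplicity_of_root hqc
    omega
  set g : Polynomial ℂ := q /ₘ (X - C c) ^ m with hgdef
  have hfac : (X - C c) ^ m * g = q := q.pow_mul_divByMonic_rootMultiplicity_eq c
  have hgc : g.eval c ≠ 0 := eval_divByMonic_pow_rootMultiplicity_ne_zero c hq0
  have hmC : (m : ℂ) ≠ 0 := Nat.cast_ne_zero.2 (by omega)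
  obtain ⟨w, hw, hw0⟩ : ∃ w : ℂ, w ^ m = g.eval c ∧ w ≠ 0 :=
    ⟨Complex.exp (Complex.log (g.eval c) / m), by
      rw [← Complex.exp_nat_mul, mul_div_cancel₀ _ hmC, Complex.exp_log hgc],
      Complex.exp_ne_zero _⟩
  set G : ℂ → ℂ := fun z => g.eval z with hGdef
  set ψ : ℂ → ℂ := fun z => w * Complex.exp (Complex.log (G z / G c) / m) with hψdef
  set φ : ℂ → ℂ := fun z => (z - c) * ψ z with hφdef
  have hGG1 : G c / G c = 1 := div_self hgc
  have hψd : ∃ D, HasStrictDerivAt ψ D c := by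
    have h1 : HasStrictDerivAt (fun z => G z / G c) (g.derivative.eval c / G c) c :=
      (g.hasStrictDerivAt c).div_const _
    have hsl : G c / G c ∈ Complex.slitPlane := by
      rw [hGG1]; exact Complex.one_mem_slitPlane
    have h2 := (Complex.hasStrictDerivAt_log hsl).comp c h1
    have h3 := h2.div_const (m : ℂ)
    have h4 := (Complex.hasStrictDerivAt_exp _).comp c h3
    exact ⟨_, h4.const_mul w⟩
  obtain ⟨D, hψd⟩ := hψd
  have hψc : ψ c = w := by
    simp only [hψdef, hGG1, Complex.log_one, zero_div, Complex.exp_zero, mul_one]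
  have hφd : HasStrictDerivAt φ w c := by
    have h : HasStrictDerivAt (fun y => (y - c) * ψ y) (1 * ψ c + (c - c) * D) c :=
      HasStrictDerivAt.mul ((hasStrictDerivAt_id c).sub_const c) hψd
    have hval : 1 * ψ c + (c - c) * D = w := by rw [hψc]; ring
    rw [hval] at h
    exact h
  have hφc : φ c = 0 := by simp [hφdef]
  have hF := hφd.hasStrictFDerivAt_equiv hw0
  obtain ⟨η, hη0, hηcont, hleft, hright⟩ :
      ∃ η : ℂ → ℂ, η 0 = c ∧ ContinuousAt η 0 ∧ (∀ᶠ z in 𝓝 c, η (φ z) = z) ∧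
        (∀ᶠ y in 𝓝 (0:ℂ), φ (η y) = y) := by
    refine ⟨hF.localInverse φ _ c, ?_, ?_, hF.eventually_left_inverse, ?_⟩
    · rw [← hφc]; exact hF.localInverse_apply_image
    · rw [← hφc]; exact hF.localInverse_continuousAt
    · rw [← hφc]; exact hF.eventually_right_inverse
  have hGcont : ContinuousAt G c := g.continuous.continuousAt
  have hUev : ∀ᶠ z in 𝓝 c, G z ≠ 0 := hGcont.eventually_ne hgc
  have hkey : ∀ᶠ z in 𝓝 c, φ z ^ m = q.eval z := by
    filter_upwards [hUev] with z hz
    have hz0 : G z / G c ≠ 0 := div_ne_zero hz hgc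
    have hexp : (Complex.exp (Complex.log (G z / G c) / m)) ^ m = G z / G c := by
      rw [← Complex.exp_nat_mul, mul_div_cancel₀ _ hmC, Complex.exp_log hz0]
    calc φ z ^ m
        = (z - c) ^ m * (w ^ m * (Complex.exp (Complex.log (G z / G c) / m)) ^ m) := by
          simp only [hφdef, hψdef, mul_pow]
      _ = (z - c) ^ m * ((G z / G c) * G c) := by rw [hexp, hw]; ring
      _ = (z - c) ^ m * G z := by rw [div_mul_cancel₀ _ hgc]
      _ = q.eval z := by
          rw [← hfac]
          simp [hGdef, eval_mul, eval_pow]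
  obtain ⟨ζ, hζm, hζ1⟩ : ∃ ζ : ℂ, ζ ^ m = 1 ∧ ζ ≠ 1 := by
    have hζprim := Complex.isPrimitiveRoot_exp m (by omega)
    exact ⟨_, hζprim.pow_eq_one, hζprim.ne_one (by omega)⟩
  have hφcont : ContinuousAt φ c := (HasStrictDerivAt.hasDerivAt hφd).continuousAt
  have hmul0 : Tendsto (fun a => ζ * φ a) (𝓝 c) (𝓝 0) := by
    have h1 := hφcont.tendsto
    rw [hφc] at h1
    have := tendsto_const_nhds.mul h1 (f := fun _ : ℂ => ζ)
    simpa using this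
  have hηt : Tendsto η (𝓝 0) (𝓝 c) := by
    have := hηcont.tendsto
    rwa [hη0] at this
  have hTc : Tendsto (fun a => η (ζ * φ a)) (𝓝 c) (𝓝 c) := hηt.comp hmul0
  intro ε hε
  have hball : ∀ᶠ y in 𝓝 c, dist y c < ε :=
    Metric.eventually_nhds_iff.2 ⟨ε, hε, fun {y} hy => hy⟩
  have hE : ∀ᶠ a in 𝓝 c, dist (η (ζ * φ a)) c < ε ∧
      (φ (η (ζ * φ a)) = ζ * φ a) ∧ (η (φ a) = a) ∧ (φ a ^ m = q.eval a) ∧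
      (φ (η (ζ * φ a)) ^ m = q.eval (η (ζ * φ a))) := by
    filter_upwards [hTc.eventually hball, hmul0.eventually hright, hleft, hkey,
      hTc.eventually hkey] with a e1 e2 e3 e4 e5
    exact ⟨e1, e2, e3, e4, e5⟩
  rw [Metric.eventually_nhds_iff] at hE
  obtain ⟨δ, hδ0, hδ⟩ := hE
  refine ⟨δ, hδ0, fun a ha hac => ?_⟩
  obtain ⟨h1, h2, h3, h4, h5⟩ := hδ ha
  have hφa0 : φ a ≠ 0 := fun h0 => hac (by rw [← h3, h0, hη0])
  refine ⟨η (ζ * φ a), h1, ?_, ?_⟩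
  · intro heq
    rw [heq] at h2
    have hz : (ζ - 1) * φ a = 0 := by rw [sub_mul, one_mul]; rw [← h2]; ring
    rcases mul_eq_zero.1 hz with h | h
    · exact hζ1 (by rwa [sub_eq_zero] at h)
    · exact hφa0 h
  · have hq : q.eval (η (ζ * φ a)) = q.eval a := by
      rw [← h5, h2, mul_pow, hζm, one_mul, h4]
    have hsubq : p.eval (η (ζ * φ a)) - p.eval c = p.eval a - p.eval c := by
      simpa [hqdef] using hq
    exact sub_left_inj.1 hsubq

/-- let `P` be a polynomial of degree `> 1` with connected filled Julia
set `K_P`, `Zc` an admissible collection of cuts such that `P` is injective on the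
connected avoiding set `A = A_P(Zc)`, the root points of cuts of `Zc` are repelling
fixed points, and `A` has no non-repelling periodic points other than possibly these
root points. If `c ∈ A` is a critical point of `P`, then `c` is a root point of some
cut in `Zc`. -/
theorem critical_point_in_avoiding_set_is_root
    (p : Polynomial ℂ) (hdeg : 1 < p.natDegree)
    (P : ℂ → ℂ) (hP : P = fun z => p.eval z)
    (K : Set ℂ)
    (hK : K = {z : ℂ | ∃ M : ℝ, ∀ n : ℕ, ‖P^[n] z‖ ≤ M})
    (hKconn : IsConnected K)
    (Zc : Set (PolyCut P K)) (hZ : IsAdmissible P K Zc)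
    (A : Set ℂ) (hA : A = avoidingSet P K Zc)
    (hAconn : IsConnected A)
    (hinj : Set.InjOn P A)
    (hrootfix : ∀ Γ ∈ Zc, P Γ.root = Γ.root ∧ 1 < ‖deriv P Γ.root‖)
    (hrep : ∀ z ∈ A, ∀ n : ℕ, 0 < n → P^[n] z = z →
      1 < ‖deriv (P^[n]) z‖ ∨ ∃ Γ ∈ Zc, z = Γ.root)
    (c : ℂ) (hc : c ∈ A) (hcrit : p.derivative.eval c = 0) :
    ∃ Γ ∈ Zc, c = Γ.root := by
  classical
  have hPz : ∀ z, P z = p.eval z := fun z => by rw [hP]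
  have hmemA : ∀ x, x ∈ A ↔ x ∈ K ∧ ∀ n : ℕ, P^[n] x ∉ ⋃ Γ ∈ Zc, Γ.wedge := by
    intro x
    rw [hA]
    exact Set.mem_sep_iff
  have hAK : A ⊆ K := fun x hx => ((hmemA x).1 hx).1
  have hKmem : ∀ z, z ∈ K ↔ ∃ M : ℝ, ∀ n : ℕ, ‖P^[n] z‖ ≤ M := fun z => by
    rw [hK]; exact Iff.rfl
  have hKback : ∀ z, P z ∈ K → z ∈ K := by
    intro z hz
    rw [hKmem] at hz ⊢
    obtain ⟨M, hM⟩ := hz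
    refine ⟨max M ‖z‖, fun n => ?_⟩
    cases n with
    | zero => simpa using le_max_right _ _
    | succ n =>
      rw [Function.iterate_succ_apply]
      exact le_trans (hM n) (le_max_left _ _)
  have hAfwd : ∀ x, x ∈ A → P x ∈ A := by
    intro x hx
    obtain ⟨hxK, hav⟩ := (hmemA x).1 hx
    refine (hmemA _).2 ⟨?_, fun n => ?_⟩
    · obtain ⟨M, hM⟩ := (hKmem x).1 hxK
      refine (hKmem _).2 ⟨M, fun n => ?_⟩
      rw [← Function.iterate_succ_apply]
      exact hM (n + 1)
    · rw [← Function.iterate_succ_apply]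
      exact hav (n + 1)
  have hAback : ∀ x, x ∈ K → (x ∉ ⋃ Γ ∈ Zc, Γ.wedge) → P x ∈ A → x ∈ A := by
    intro x hxK hxW hPx
    refine (hmemA _).2 ⟨hxK, fun n => ?_⟩
    cases n with
    | zero => simpa using hxW
    | succ n =>
      rw [Function.iterate_succ_apply]
      exact ((hmemA _).1 hPx).2 n
  by_cases hsing : ∀ a ∈ A, a = c
  · have hPc : P c = c := hsing _ (hAfwd c hc)
    rcases hrep c hc 1 one_pos (by simpa using hPc) with h | h
    · exfalso
      rw [Function.iterate_one] at h
      rw [hP, Polynomial.deriv, hcrit] at h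
      norm_num at h
    · exact h
  · push_neg at hsing
    obtain ⟨a₀, ha₀A, ha₀⟩ := hsing
    have hacc : ∀ U ∈ 𝓝 c, ∃ a, a ∈ A ∧ a ∈ U ∧ a ≠ c := by
      intro U hU
      obtain ⟨V, hVU, hVo, hcV⟩ := mem_nhds_iff.1 hU
      by_contra h
      push_neg at h
      have hcov : A ⊆ V ∪ {c}ᶜ := by
        intro x hxA
        by_cases hxc : x = c
        · exact Or.inl (hxc ▸ hcV)
        · exact Or.inr hxc
      obtain ⟨x, hxA, hxV, hxc⟩ := hAconn.isPreconnected V {c}ᶜ hVo isOpen_compl_singleton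
        hcov ⟨c, hc, hcV⟩ ⟨a₀, ha₀A, ha₀⟩
      exact hxc (h x hxA (hVU hxV))
    have hWcl : c ∈ closure (⋃ Γ ∈ Zc, Γ.wedge) := by
      rw [Metric.mem_closure_iff]
      intro ε hε
      obtain ⟨δ, hδ0, hδP⟩ := sibling_exists p c hdeg hcrit ε hε
      obtain ⟨a, haA, haB, hac⟩ := hacc (Metric.ball c δ) (Metric.ball_mem_nhds c hδ0)
      obtain ⟨b, hbε, hba, hbeval⟩ := hδP a (by simpa [Metric.mem_ball] using haB) hac
      have hPba : P b = P a := by rw [hPz, hPz, hbeval]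
      have hbK : b ∈ K := hKback b (by rw [hPba]; exact hAK (hAfwd a haA))
      by_cases hbW : b ∈ ⋃ Γ ∈ Zc, Γ.wedge
      · exact ⟨b, hbW, by rw [dist_comm]; exact hbε⟩
      · exact absurd (hinj (hAback b hbK hbW (by rw [hPba]; exact hAfwd a haA)) haA hPba) hba
    have hcU : c ∈ ⋃ Γ ∈ Zc, closure Γ.wedge := by
      have hclosed : IsClosed (⋃ Γ ∈ Zc, closure Γ.wedge) :=
        hZ.1.isClosed_biUnion fun Γ _ => isClosed_closure
      exact closure_minimal (Set.iUnion₂_mono fun Γ _ => subset_closure) hclosed hWcl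
    obtain ⟨Γ, hΓ, hcΓ⟩ := Set.mem_iUnion₂.1 hcU
    by_cases hcar : c ∈ Γ.carrier
    · rcases hcar with (⟨t, ht, hte⟩ | ⟨t, ht, hte⟩) | hroot
      · exact absurd (hte ▸ hAK hc) (Γ.rayR_out t ht)
      · exact absurd (hte ▸ hAK hc) (Γ.rayL_out t ht)
      · exact ⟨Γ, hΓ, hroot⟩
    · exfalso
      have hne : Γ.wedge.Nonempty := by
        by_contra h
        rw [Set.not_nonempty_iff_eq_empty] at h
        rw [h, closure_empty] at hcΓ
        exact hcΓ
      obtain ⟨x₀, hx₀⟩ := hne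
      have hwc : Γ.wedge = connectedComponentIn Γ.carrierᶜ x₀ := Γ.wedge_comp x₀ hx₀
      have hsub : insert c Γ.wedge ⊆ Γ.carrierᶜ := by
        intro y hy
        rcases hy with rfl | hy
        · exact hcar
        · exact connectedComponentIn_subset _ _ (hwc ▸ hy)
      have hpre : IsPreconnected (insert c Γ.wedge) := by
        have h1 : IsPreconnected Γ.wedge := by
          rw [hwc]; exact isPreconnected_connectedComponentIn
        refine h1.subset_closure (Set.subset_insert _ _) ?_
        intro y hy
        rcases hy with rfl | hy
        · exact hcΓ
        · exact subset_closure hy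
      have hfin : insert c Γ.wedge ⊆ Γ.wedge := by
        conv_rhs => rw [hwc]
        exact hpre.subset_connectedComponentIn (Set.mem_insert_of_mem _ hx₀) hsub
      have hcW : c ∈ ⋃ Γ ∈ Zc, Γ.wedge :=
        Set.mem_biUnion hΓ (hfin (Set.mem_insert _ _))
      have := ((hmemA c).1 hc).2 0
      rw [Function.iterate_zero_apply] at this
      exact this hcW
end

section
/- Every irregular point of Y is a critical point of P: if y ∈ Y is in the closure of P⁻¹(Y) \ Y intersected with Y, then P'(y) = 0. -/
open Set

/-- every irregular point of `Y` is a critical point of `P`.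
Here `P` is a polynomial, `Y` a full `P`-invariant continuum on which `P` is
locally onto, and `y ∈ Y` is irregular if `y ∈ cl(P⁻¹(Y) \ Y) ∩ Y`. -/
theorem irregular_point_is_critical
    (p : Polynomial ℂ) (hdeg : 0 < p.natDegree)
    (P : ℂ → ℂ) (hP : P = fun z => p.eval z)
    (Y : Set ℂ) (hYcpt : IsCompact Y) (hYconn : IsConnected Y)
    (hYfull : IsConnected Yᶜ)
    (hYinv : P '' Y = Y)
    (hloconto : ∀ y ∈ Y, ∀ ε > 0, ∃ δ > 0, ∀ z ∈ Y, dist z (P y) < δ →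
      ∃ y' ∈ Y, dist y' y < ε ∧ P y' = z)
    (y : ℂ) (hy : y ∈ closure (P ⁻¹' Y \ Y) ∩ Y) :
    p.derivative.eval y = 0 := by
  by_contra hne
  obtain ⟨hycl, hyY⟩ := hy
  -- P has a nonzero strict derivative at y
  have hsd : HasStrictDerivAt P (p.derivative.eval y) y := by
    rw [hP]; exact p.hasStrictDerivAt y
  -- local injectivity: a left inverse near y
  have hli := (hsd.hasStrictFDerivAt_equiv hne).eventually_left_inverse
  rw [Metric.eventually_nhds_iff] at hli
  obtain ⟨ε, hε, hg⟩ := hli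
  -- local ontoness with radius ε
  obtain ⟨δ, hδ, hδP⟩ := hloconto y hyY ε hε
  -- continuity of P at y
  have hc : ContinuousAt P y := HasDerivAt.continuousAt (HasStrictDerivAt.hasDerivAt hsd)
  rw [Metric.continuousAt_iff] at hc
  obtain ⟨ρ, hρ, hρP⟩ := hc δ hδ
  -- pick an irregular witness
  rw [Metric.mem_closure_iff] at hycl
  obtain ⟨y', hy', hdy'⟩ := hycl (min ε ρ) (lt_min hε hρ)
  rw [dist_comm] at hdy'
  have hy'ε : dist y' y < ε := hdy'.trans_le (min_le_left _ _)
  have hy'ρ : dist y' y < ρ := hdy'.trans_le (min_le_right _ _)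
  have hPy' : P y' ∈ Y := hy'.1
  have hPd : dist (P y') (P y) < δ := hρP hy'ρ
  obtain ⟨y'', hy''Y, hy''ε, hPy''⟩ := hδP (P y') hPy' hPd
  have : y'' = y' := by
    have h1 := hg hy''ε
    have h2 := hg hy'ε
    rw [hPy''] at h1
    exact h1.symm.trans h2
  exact hy'.2 (this ▸ hy''Y)
end
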